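/- arXiv:2407.06539 — 8 statements merged into one kernel-verified Lean document; each statement's English description precedes it below -/
import Mathlib

section
/- Let f0 and f1 be probability density functions on the interval (0,1), both strictly positive on (0,1), such that the likelihood ratio r ↦ f1(r)/f0(r) is non-decreasing on (0,1). Let R0 and R1 be random variables with densities f0 and f1 respectively, and let t0, t1 ∈ [0,1) be thresholds. If Pr(R0 ≥ t0) > Pr(R1 ≥ t1) (the decision rate for group 1 is lower) and E[R0 | R0 ≥ t0] < E[R1 | R1 ≥ t1] (the outcome rate for group 1 is higher), then t0 < t1. -/
open MeasureTheory Set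

/-- **Proposition 1 (simplified robust outcome test).**
Let `f0` and `f1` be probability densities on `(0,1)`, strictly positive there, whose
likelihood ratio `r ↦ f1 r / f0 r` is non-decreasing on `(0,1)` (the MLRP).  Decisions are
made by the threshold rule `D = 1` iff `R ≥ t_g`, so that `∫_{(0,1) ∩ [t_g, ∞)} f_g` is
group `g`'s decision rate and
`(∫_{(0,1) ∩ [t_g, ∞)} r · f_g r) / (∫_{(0,1) ∩ [t_g, ∞)} f_g r)` its outcome rate
`E[R_g | R_g ≥ t_g]`.  If group `1` has a strictly lower decision rate and a strictly
higher outcome rate than group `0`, then `t0 < t1`. -/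
theorem robust_outcome_test_simple
    (f0 f1 : ℝ → ℝ) (t0 t1 : ℝ)
    (hf0meas : Measurable f0) (hf1meas : Measurable f1)
    (hf0pos : ∀ r ∈ Ioo (0:ℝ) 1, 0 < f0 r)
    (hf1pos : ∀ r ∈ Ioo (0:ℝ) 1, 0 < f1 r)
    (hf0pdf : (∫ r in Ioo (0:ℝ) 1, f0 r) = 1)
    (hf1pdf : (∫ r in Ioo (0:ℝ) 1, f1 r) = 1)
    (hmlr : MonotoneOn (fun r => f1 r / f0 r) (Ioo (0:ℝ) 1))
    (ht0 : t0 ∈ Ico (0:ℝ) 1) (ht1 : t1 ∈ Ico (0:ℝ) 1)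
    -- benchmark test: group 1's decision rate is lower
    (hDR : (∫ r in Ioo (0:ℝ) 1 ∩ Ici t1, f1 r) < ∫ r in Ioo (0:ℝ) 1 ∩ Ici t0, f0 r)
    -- outcome test: group 1's outcome rate is higher
    (hOR : (∫ r in Ioo (0:ℝ) 1 ∩ Ici t0, r * f0 r) / (∫ r in Ioo (0:ℝ) 1 ∩ Ici t0, f0 r) <
           (∫ r in Ioo (0:ℝ) 1 ∩ Ici t1, r * f1 r) / (∫ r in Ioo (0:ℝ) 1 ∩ Ici t1, f1 r)) :
    t0 < t1 := by
  by_contra hcon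
  push_neg at hcon
  -- integrability
  have hi0 : IntegrableOn f0 (Ioo (0:ℝ) 1) := by
    by_contra hc
    rw [MeasureTheory.integral_undef hc] at hf0pdf; norm_num at hf0pdf
  have hi1 : IntegrableOn f1 (Ioo (0:ℝ) 1) := by
    by_contra hc
    rw [MeasureTheory.integral_undef hc] at hf1pdf; norm_num at hf1pdf
  have hsub0 : Ioo (0:ℝ) 1 ∩ Ici t0 ⊆ Ioo 0 1 := inter_subset_left
  have hsub1 : Ioo (0:ℝ) 1 ∩ Ici t1 ⊆ Ioo 0 1 := inter_subset_left
  have hms0 : MeasurableSet (Ioo (0:ℝ) 1 ∩ Ici t0) :=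
    measurableSet_Ioo.inter measurableSet_Ici
  have hms1 : MeasurableSet (Ioo (0:ℝ) 1 ∩ Ici t1) :=
    measurableSet_Ioo.inter measurableSet_Ici
  have hmsIio : MeasurableSet (Ioo (0:ℝ) 1 ∩ Iio t0) :=
    measurableSet_Ioo.inter measurableSet_Iio
  -- key: FOSD tail inequality at t0
  have key : (∫ r in Ioo (0:ℝ) 1 ∩ Ici t0, f0 r) ≤ ∫ r in Ioo (0:ℝ) 1 ∩ Ici t0, f1 r := by
    by_cases hB : ∃ s ∈ Ioo (0:ℝ) t0, f0 s < f1 s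
    · -- there's a point below t0 where ratio > 1, so f0 ≤ f1 on the tail
      obtain ⟨s, hs, hsf⟩ := hB
      have hs01 : s ∈ Ioo (0:ℝ) 1 := ⟨hs.1, lt_trans hs.2 ht0.2⟩
      have hpt : ∀ r ∈ Ioo (0:ℝ) 1 ∩ Ici t0, f0 r ≤ f1 r := by
        rintro r ⟨hr01, hrt⟩
        have hratio : (fun r => f1 r / f0 r) s ≤ (fun r => f1 r / f0 r) r :=
          hmlr hs01 hr01 (le_trans (le_of_lt hs.2) hrt)
        have h1 : (1:ℝ) < f1 s / f0 s :=
          (one_lt_div (hf0pos s hs01)).2 hsf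
        have h2 : (1:ℝ) < f1 r / f0 r := lt_of_lt_of_le h1 hratio
        have := (one_lt_div (hf0pos r hr01)).1 h2
        linarith
      exact setIntegral_mono_on (hi0.mono_set hsub0) (hi1.mono_set hsub0) hms0 hpt
    · -- f1 ≤ f0 on (0, t0); compare via complements
      push_neg at hB
      have hlow : (∫ r in Ioo (0:ℝ) 1 ∩ Iio t0, f1 r) ≤ ∫ r in Ioo (0:ℝ) 1 ∩ Iio t0, f0 r := by
        apply setIntegral_mono_on
          (hi1.mono_set inter_subset_left) (hi0.mono_set inter_subset_left) hmsIio
        rintro r ⟨hr01, hrt⟩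
        exact hB r ⟨hr01.1, hrt⟩
      have hsplit : ∀ g : ℝ → ℝ, IntegrableOn g (Ioo (0:ℝ) 1) →
          (∫ r in Ioo (0:ℝ) 1 ∩ Ici t0, g r) + (∫ r in Ioo (0:ℝ) 1 ∩ Iio t0, g r)
            = ∫ r in Ioo (0:ℝ) 1, g r := by
        intro g hg
        rw [← MeasureTheory.setIntegral_union]
        · congr 1
          rw [← inter_union_distrib_left]
          congr 1
          ext x; simp [le_or_gt]
        · exact Set.disjoint_left.2
            (by rintro x ⟨_, hx1⟩ ⟨_, hx2⟩; exact lt_irrefl x (lt_of_lt_of_le hx2 hx1))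
        · exact hmsIio
        · exact hg.mono_set inter_subset_left
        · exact hg.mono_set inter_subset_left
      have h0 := hsplit f0 hi0
      have h1 := hsplit f1 hi1
      rw [hf0pdf] at h0
      rw [hf1pdf] at h1
      linarith
  -- monotonicity in threshold for f1
  have mono : (∫ r in Ioo (0:ℝ) 1 ∩ Ici t0, f1 r) ≤ ∫ r in Ioo (0:ℝ) 1 ∩ Ici t1, f1 r := by
    apply setIntegral_mono_set (hi1.mono_set hsub1)
    · exact ae_restrict_of_forall_mem hms1 fun x hx => (hf1pos x hx.1).le
    · exact Filter.Eventually.of_forall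
        (inter_subset_inter_right _ (Ici_subset_Ici.2 hcon))
  linarith
end

section
/- Let (Ω, F, P) be a probability space with random variables U : Ω → ℝ, G : Ω → {0,1}, and D : Ω → {0,1} satisfying: (i) P(G = g) > 0 and P(D = 1 | G = g) > 0 for g ∈ {0,1}; (ii) E[|U|] < ∞; (iii) 0 < P(G = 1 | U) < 1 almost surely; (iv) the conditional distributions law(U | G = 0) and law(U | G = 1) satisfy the monotone likelihood ratio property (one dominating the other); (v) for g ∈ {0,1}, the risk-decision curve d_g(u) := P(D = 1 | U = u, G = g) agrees law(U)-a.e. with a non-decreasing, right-continuous, [0,1]-valued function, and the distributions H0 and H1 on the extended reals generated by d_0 and d_1 (i.e., with d_g as CDF law(U)-a.e.) satisfy the monotone likelihood ratio property (one dominating the other). If P(D = 1 | G = 0) > P(D = 1 | G = 1) and E[U | D = 1, G = 0] < E[U | D = 1, G = 1], then d_0(u) ≥ d_1(u) for law(U)-a.e. u, and d_0(u) > d_1(u) on a set of positive law(U)-measure. -/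
open MeasureTheory ProbabilityTheory Set

/-- The monotone likelihood ratio property (MLRP) for two distributions `F0` and `F1`
on a linearly ordered measurable space, with `F0` dominating: the ratio of the
Radon–Nikodym derivatives of `F0` and `F1` with respect to the sum measure `F0 + F1`
is non-decreasing `(F0 + F1)`-almost everywhere (with the convention, automatic in
`ℝ≥0∞`, that the ratio is `∞` where the density of `F1` vanishes but that of `F0`
does not). -/
def MLRP {α : Type*} [MeasurableSpace α] [LinearOrder α]
    (F0 F1 : Measure α) : Prop :=
  ∃ S : Set α, (F0 + F1) S = 0 ∧
    ∀ x, x ∉ S → ∀ y, y ∉ S → x ≤ y →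
      F0.rnDeriv (F0 + F1) x / F1.rnDeriv (F0 + F1) x ≤
        F0.rnDeriv (F0 + F1) y / F1.rnDeriv (F0 + F1) y

lemma cross_pt {a b c d : ENNReal} (hc : c ≠ ⊤) (hb : b ≠ ⊤) (hd : d ≠ ⊤)
    (h : a / b ≤ c / d) : a * d ≤ c * b := by
  rcases eq_or_ne d 0 with hd0 | hd0
  · simp [hd0]
  rcases eq_or_ne b 0 with hb0 | hb0
  · rcases eq_or_ne a 0 with ha0 | ha0
    · simp [ha0]
    · rw [hb0, ENNReal.div_zero ha0] at h
      have htop := top_le_iff.mp h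
      have h2 : c = ⊤ ∧ ¬ d = ⊤ := by simpa [ENNReal.div_eq_top, hd0] using htop
      exact absurd h2.1 hc
  · calc a * d = a / b * b * d := by rw [ENNReal.div_mul_cancel hb0 hb]
    _ ≤ c / d * b * d := by gcongr
    _ = c / d * d * b := by ring
    _ = c * b := by rw [ENNReal.div_mul_cancel hd0 hd]

lemma cross_of_density {α : Type*} [MeasurableSpace α] [LinearOrder α]
    (μ : Measure α) (p0 p1 : α → ENNReal) (hp0 : Measurable p0) (hp1 : Measurable p1)
    (T : Set α) (hT0 : μ T = 0)
    (hcross : ∀ w ∉ T, ∀ z ∉ T, w ≤ z → p0 w * p1 z ≤ p0 z * p1 w)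
    {A B : Set α} (hA : MeasurableSet A) (hB : MeasurableSet B)
    (hAB : ∀ a ∈ A, ∀ b ∈ B, a ≤ b) :
    (∫⁻ x in A, p0 x ∂μ) * (∫⁻ x in B, p1 x ∂μ) ≤
      (∫⁻ x in B, p0 x ∂μ) * (∫⁻ x in A, p1 x ∂μ) := by
  have hTA : ∀ᵐ y ∂(μ.restrict A), y ∈ A ∧ y ∉ T := by
    filter_upwards [ae_restrict_mem hA,
      ae_restrict_of_ae (μ := μ) (s := A) ((ae_iff.2 (by simpa using hT0)) : ∀ᵐ y ∂μ, y ∉ T)]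
      with y h1 h2
    exact ⟨h1, h2⟩
  have hTB : ∀ᵐ z ∂(μ.restrict B), z ∈ B ∧ z ∉ T := by
    filter_upwards [ae_restrict_mem hB,
      ae_restrict_of_ae (μ := μ) (s := B) ((ae_iff.2 (by simpa using hT0)) : ∀ᵐ z ∂μ, z ∉ T)]
      with z h1 h2
    exact ⟨h1, h2⟩
  calc (∫⁻ x in A, p0 x ∂μ) * (∫⁻ x in B, p1 x ∂μ)
      = ∫⁻ y in A, p0 y * (∫⁻ z in B, p1 z ∂μ) ∂μ := (lintegral_mul_const _ hp0).symm
    _ ≤ ∫⁻ y in A, (∫⁻ z in B, p0 z ∂μ) * p1 y ∂μ := by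
        refine lintegral_mono_ae ?_
        filter_upwards [hTA] with y hy
        calc p0 y * (∫⁻ z in B, p1 z ∂μ) = ∫⁻ z in B, p0 y * p1 z ∂μ :=
              (lintegral_const_mul _ hp1).symm
          _ ≤ ∫⁻ z in B, p0 z * p1 y ∂μ := by
              refine lintegral_mono_ae ?_
              filter_upwards [hTB] with z hz
              exact hcross y hy.2 z hz.2 (hAB y hy.1 z hz.1)
          _ = (∫⁻ z in B, p0 z ∂μ) * p1 y := lintegral_mul_const _ hp0
    _ = (∫⁻ x in B, p0 x ∂μ) * (∫⁻ x in A, p1 x ∂μ) := lintegral_const_mul _ hp1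

lemma mlrp_cross_weighted {α : Type*} [MeasurableSpace α] [LinearOrder α]
    {F0 F1 : Measure α} [IsFiniteMeasure F0] [IsFiniteMeasure F1]
    (h : MLRP F0 F1) {q0 q1 : α → ENNReal} (hq0 : Measurable q0) (hq1 : Measurable q1)
    (hq : ∀ w z : α, w ≤ z → q0 w * q1 z ≤ q0 z * q1 w)
    {A B : Set α} (hA : MeasurableSet A) (hB : MeasurableSet B)
    (hAB : ∀ a ∈ A, ∀ b ∈ B, a ≤ b) :
    (∫⁻ x in A, q0 x ∂F0) * (∫⁻ x in B, q1 x ∂F1) ≤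
      (∫⁻ x in B, q0 x ∂F0) * (∫⁻ x in A, q1 x ∂F1) := by
  obtain ⟨S, hS0, hS⟩ := h
  set μ := F0 + F1 with hμ
  set g0 := F0.rnDeriv μ with hg0
  set g1 := F1.rnDeriv μ with hg1
  have hm0 : Measurable g0 := Measure.measurable_rnDeriv _ _
  have hm1 : Measurable g1 := Measure.measurable_rnDeriv _ _
  have hac0 : F0 ≪ μ := (Measure.absolutelyContinuous_of_le (Measure.le_add_right le_rfl))
  have hac1 : F1 ≪ μ := (Measure.absolutelyContinuous_of_le (Measure.le_add_left le_rfl))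
  set T : Set α := toMeasurable μ S ∪ ({x | g0 x = ⊤} ∪ {x | g1 x = ⊤}) with hT
  have hT0 : μ T = 0 := by
    refine measure_union_null (by simpa [measure_toMeasurable] using hS0) (measure_union_null ?_ ?_)
    · simpa [ae_iff] using (Measure.rnDeriv_lt_top F0 μ).mono (fun x hx => hx.ne)
    · simpa [ae_iff] using (Measure.rnDeriv_lt_top F1 μ).mono (fun x hx => hx.ne)
  have key : ∀ w ∉ T, ∀ z ∉ T, w ≤ z →
      (g0 w * q0 w) * (g1 z * q1 z) ≤ (g0 z * q0 z) * (g1 w * q1 w) := by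
    intro w hw z hz hwz
    simp only [hT, mem_union, not_or, mem_setOf_eq] at hw hz
    have hgc : g0 w * g1 z ≤ g0 z * g1 w :=
      cross_pt hz.2.1 hw.2.2 hz.2.2
        (hS w (fun hs => hw.1 (subset_toMeasurable μ S hs))
          z (fun hs => hz.1 (subset_toMeasurable μ S hs)) hwz)
    calc (g0 w * q0 w) * (g1 z * q1 z) = (g0 w * g1 z) * (q0 w * q1 z) := by ring
      _ ≤ (g0 z * g1 w) * (q0 z * q1 w) := mul_le_mul' hgc (hq w z hwz)
      _ = (g0 z * q0 z) * (g1 w * q1 w) := by ring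
  have e0 : ∀ C : Set α, MeasurableSet C →
      ∫⁻ x in C, q0 x ∂F0 = ∫⁻ x in C, g0 x * q0 x ∂μ := fun C hC => by
    conv_lhs => rw [← Measure.withDensity_rnDeriv_eq F0 μ hac0]
    rw [setLIntegral_withDensity_eq_setLIntegral_mul μ hm0 hq0 hC]; rfl
  have e1 : ∀ C : Set α, MeasurableSet C →
      ∫⁻ x in C, q1 x ∂F1 = ∫⁻ x in C, g1 x * q1 x ∂μ := fun C hC => by
    conv_lhs => rw [← Measure.withDensity_rnDeriv_eq F1 μ hac1]
    rw [setLIntegral_withDensity_eq_setLIntegral_mul μ hm1 hq1 hC]; rfl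
  rw [e0 A hA, e0 B hB, e1 A hA, e1 B hB]
  exact cross_of_density μ _ _ (hm0.mul hq0) (hm1.mul hq1) T hT0 key hA hB hAB

lemma mlrp_cross {α : Type*} [MeasurableSpace α] [LinearOrder α]
    {F0 F1 : Measure α} [IsFiniteMeasure F0] [IsFiniteMeasure F1]
    (h : MLRP F0 F1) {A B : Set α} (hA : MeasurableSet A) (hB : MeasurableSet B)
    (hAB : ∀ a ∈ A, ∀ b ∈ B, a ≤ b) :
    F0 A * F1 B ≤ F0 B * F1 A := by
  have := mlrp_cross_weighted h measurable_const measurable_const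
    (q0 := fun _ => 1) (q1 := fun _ => 1) (fun w z _ => le_rfl) hA hB hAB
  simpa [measure_toMeasurable] using this

/-- From the cross inequality on a lower/upper pair, deduce CDF ordering for
probability measures. -/
lemma le_of_cross {α : Type*} [MeasurableSpace α]
    {F0 F1 : Measure α} [IsProbabilityMeasure F0] [IsProbabilityMeasure F1]
    {L : Set α} (hL : MeasurableSet L)
    (h : F0 L * F1 Lᶜ ≤ F0 Lᶜ * F1 L) : F0 L ≤ F1 L := by
  rw [prob_compl_eq_one_sub hL, prob_compl_eq_one_sub hL] at h
  have h0t : F0 L ≠ ⊤ := (measure_lt_top _ _).ne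
  have h1t : F1 L ≠ ⊤ := (measure_lt_top _ _).ne
  have h0le : F0 L ≤ 1 := prob_le_one
  have h1le : F1 L ≤ 1 := prob_le_one
  set a := (F0 L).toReal with ha
  set b := (F1 L).toReal with hb
  have key : a * (1 - b) ≤ (1 - a) * b := by
    have := ENNReal.toReal_mono (by finiteness) h
    rw [ENNReal.toReal_mul, ENNReal.toReal_mul, ENNReal.toReal_sub_of_le h1le (by simp),
      ENNReal.toReal_sub_of_le h0le (by simp)] at this
    simpa using this
  rw [← ENNReal.toReal_le_toReal h0t h1t]
  nlinarith [key]

/-- A lower set in ℝ is measurable, given a point inside and a point outside. -/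
lemma isLowerSet_measurable {L : Set ℝ} (hL : IsLowerSet L) : MeasurableSet L := by
  rcases eq_empty_or_nonempty L with rfl | ⟨a, haL⟩
  · exact MeasurableSet.empty
  rcases eq_empty_or_nonempty Lᶜ with hc | ⟨b, hbL⟩
  · have : L = univ := by
      rw [← compl_empty_iff, hc]
    simp [this]
  have hbdd : BddAbove L := ⟨b, fun x hx => by
    by_contra hxb
    exact hbL (hL (le_of_not_ge hxb) hx)⟩
  set c := sSup L with hc
  have hsub : L ⊆ Iic c := fun x hx => le_csSup hbdd hx
  have hsub2 : Iio c ⊆ L := fun x hx => by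
    obtain ⟨y, hyL, hxy⟩ := exists_lt_of_lt_csSup ⟨a, haL⟩ hx
    exact hL hxy.le hyL
  by_cases hcL : c ∈ L
  · have : L = Iic c := Subset.antisymm hsub (fun x hx => hL hx hcL)
    rw [this]; exact measurableSet_Iic
  · have : L = Iio c := Subset.antisymm
      (fun x hx => lt_of_le_of_ne (hsub hx) (fun heq : x = c => hcL (heq ▸ hx))) hsub2
    rw [this]; exact measurableSet_Iio

lemma isLowerSet_le_compl {α : Type*} [LinearOrder α] {L : Set α} (hL : IsLowerSet L) :
    ∀ a ∈ L, ∀ b ∈ Lᶜ, a ≤ b := by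
  intro a ha b hb
  by_contra hab
  exact hb (hL (le_of_not_ge hab) ha)

/-- MLRP implies CDF-ratio monotonicity: for `x ≤ y`,
`F0 (Iic x) * F1 (Iic y) ≤ F0 (Iic y) * F1 (Iic x)`. -/
lemma mlrp_cdf_ratio {α : Type*} [MeasurableSpace α] [LinearOrder α]
    [TopologicalSpace α] [OrderClosedTopology α] [OpensMeasurableSpace α]
    {F0 F1 : Measure α} [IsFiniteMeasure F0] [IsFiniteMeasure F1]
    (h : MLRP F0 F1) {x y : α} (hxy : x ≤ y) :
    F0 (Iic x) * F1 (Iic y) ≤ F0 (Iic y) * F1 (Iic x) := by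
  have hcross : F0 (Iic x) * F1 (Ioc x y) ≤ F0 (Ioc x y) * F1 (Iic x) :=
    mlrp_cross h measurableSet_Iic measurableSet_Ioc
      (fun a ha b hb => le_trans ha hb.1.le)
  have hdecomp : ∀ (F : Measure α), F (Iic y) = F (Iic x) + F (Ioc x y) := fun F => by
    rw [← Iic_union_Ioc_eq_Iic hxy]
    exact measure_union (by exact Iic_disjoint_Ioc le_rfl) measurableSet_Ioc
  rw [hdecomp F0, hdecomp F1, mul_add, add_mul]
  exact add_le_add le_rfl hcross

/-- Layer-cake comparison: if superlevel measures are ordered, so are integrals of a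
nonnegative function. -/
lemma integral_le_of_meas_lt_le {α : Type*} [MeasurableSpace α] {μ ν : Measure α}
    {f : α → ℝ} (hf : 0 ≤ f) (hfmμ : AEMeasurable f μ) (hfmν : AEMeasurable f ν)
    (hintμ : Integrable f μ) (hintν : Integrable f ν)
    (h : ∀ t ∈ Ioi (0:ℝ), μ {a | t < f a} ≤ ν {a | t < f a}) :
    ∫ a, f a ∂μ ≤ ∫ a, f a ∂ν := by
  have hlt : ∀ (ρ : Measure α), Integrable f ρ → ∫⁻ a, ENNReal.ofReal (f a) ∂ρ ≠ ⊤ := by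
    intro ρ hint
    refine (lt_of_le_of_lt (lintegral_mono (fun a => Real.ofReal_le_enorm (f a))) hint.2).ne
  have hν : ∫⁻ a, ENNReal.ofReal (f a) ∂ν ≠ ⊤ := hlt ν hintν
  rw [lintegral_eq_lintegral_meas_lt ν (Filter.Eventually.of_forall hf) hfmν] at hν
  rw [integral_eq_lintegral_of_nonneg_ae (Filter.Eventually.of_forall hf) hintμ.1,
    integral_eq_lintegral_of_nonneg_ae (Filter.Eventually.of_forall hf) hintν.1,
    lintegral_eq_lintegral_meas_lt μ (Filter.Eventually.of_forall hf) hfmμ,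
    lintegral_eq_lintegral_meas_lt ν (Filter.Eventually.of_forall hf) hfmν]
  refine ENNReal.toReal_mono hν ?_
  refine lintegral_mono_ae ?_
  filter_upwards [ae_restrict_mem measurableSet_Ioi] with t ht
  exact h t ht

/-- **Theorem 1 (general correctness of the robust outcome test).**
Let `(Ω, P)` be a probability space carrying a utility `U : Ω → ℝ`, a group indicator
`G : Ω → {0,1}`, and a decision `D : Ω → {0,1}`, with
(i) `P(G = g) > 0` and `P(D = 1 | G = g) > 0` for `g ∈ {0,1}`;
(ii) `E|U| < ∞`;
(iii) overlap: `0 < P(G = 1 | U) < 1` a.s. (in terms of the conditional expectation of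
the indicator of `{G = 1}` given `σ(U)`);
(iv) the conditional laws `law(U | G = 0)` and `law(U | G = 1)` satisfy the MLRP,
one dominating the other;
(v) the risk-decision curves `d g`, characterized by
`P(D = 1, U ∈ A | G = g) = ∫_A d g u d(law(U | G = g))` for all Borel `A`, generate
probability distributions `H g` on the extended reals (i.e. `d g` agrees `law(U)`-a.e.
with the CDF of `H g`, hence is a.e. equal to a non-decreasing, right-continuous,
`[0,1]`-valued function), and `H 0`, `H 1` satisfy the MLRP, one dominating the other.
If the decision rate for group `0` strictly exceeds that of group `1` while the outcome
rate `E[U | D = 1, G = 0]` is strictly smaller than `E[U | D = 1, G = 1]`, then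
`d 0 ≥ d 1` holds `law(U)`-a.e., with strict inequality on a set of positive
`law(U)`-measure. -/
theorem robust_outcome_test_general
    {Ω : Type*} [MeasurableSpace Ω] (P : Measure Ω) [IsProbabilityMeasure P]
    (U : Ω → ℝ) (G D : Ω → Fin 2)
    (hU : Measurable U) (hG : Measurable G) (hD : Measurable D)
    -- (i) non-trivial groups and positive decision rates
    (hGpos : ∀ g : Fin 2, 0 < P {ω | G ω = g})
    (hDpos : ∀ g : Fin 2, 0 < P[|{ω | G ω = g}] {ω | D ω = 1})
    -- (ii) U has a well-defined (finite) expectation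
    (hUint : Integrable U P)
    -- (iii) overlap
    (hoverlap : ∀ᵐ ω ∂P,
      0 < (P[{ω | G ω = 1}.indicator (fun _ => (1:ℝ)) |
              MeasurableSpace.comap U Real.measurableSpace]) ω ∧
        (P[{ω | G ω = 1}.indicator (fun _ => (1:ℝ)) |
              MeasurableSpace.comap U Real.measurableSpace]) ω < 1)
    -- (iv) the conditional laws of U by group satisfy the MLRP, one dominating the other
    (hlawmlrp : MLRP ((P[|{ω | G ω = 0}]).map U) ((P[|{ω | G ω = 1}]).map U) ∨
      MLRP ((P[|{ω | G ω = 1}]).map U) ((P[|{ω | G ω = 0}]).map U))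
    -- (v) risk-decision curves d g (versions of P(D = 1 | U = u, G = g)) generating
    -- distributions H g on the extended reals that satisfy the MLRP
    (d : Fin 2 → ℝ → ℝ) (hdmeas : ∀ g, Measurable (d g))
    (hdversion : ∀ g : Fin 2, ∀ A : Set ℝ, MeasurableSet A →
      (P[|{ω | G ω = g}] {ω | D ω = 1 ∧ U ω ∈ A}).toReal =
        ∫ u in A, d g u ∂((P[|{ω | G ω = g}]).map U))
    (H : Fin 2 → Measure EReal) (hHprob : ∀ g, IsProbabilityMeasure (H g))
    (hgen : ∀ g : Fin 2, ∀ᵐ u ∂(P.map U), d g u = (H g (Iic (u : EReal))).toReal)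
    (hHmlrp : MLRP (H 0) (H 1) ∨ MLRP (H 1) (H 0))
    -- benchmark test: the decision rate for group 0 exceeds that for group 1
    (hbench : P[|{ω | G ω = 1}] {ω | D ω = 1} < P[|{ω | G ω = 0}] {ω | D ω = 1})
    -- outcome test: the outcome rate for group 1 exceeds that for group 0
    (houtcome : (∫ ω, U ω ∂P[|{ω | D ω = 1 ∧ G ω = 0}]) <
      ∫ ω, U ω ∂P[|{ω | D ω = 1 ∧ G ω = 1}]) :
    (∀ᵐ u ∂(P.map U), d 1 u ≤ d 0 u) ∧ 0 < (P.map U) {u | d 1 u < d 0 u} := by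
  classical
  -- notation
  set sG : Fin 2 → Set Ω := fun g => {ω | G ω = g} with hsG
  set sD : Set Ω := {ω | D ω = 1} with hsD
  have hsGm : ∀ g, MeasurableSet (sG g) := fun g => hG (measurableSet_singleton g)
  have hsDm : MeasurableSet sD := hD (measurableSet_singleton 1)
  have hκ0 : ∀ g, P (sG g) ≠ 0 := fun g => (hGpos g).ne'
  have hκt : ∀ g, P (sG g) ≠ ⊤ := fun g => (measure_lt_top _ _).ne
  have hcondP : ∀ g, IsProbabilityMeasure (P[|sG g]) := fun g =>
    cond_isProbabilityMeasure (hκ0 g)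
  set F : Fin 2 → Measure ℝ := fun g => (P[|sG g]).map U with hF
  have hFprob : ∀ g, IsProbabilityMeasure (F g) := fun g =>
    Measure.isProbabilityMeasure_map hU.aemeasurable
  set lawU : Measure ℝ := P.map U with hlawU
  have hlawprob : IsProbabilityMeasure lawU := Measure.isProbabilityMeasure_map hU.aemeasurable
  -- F g is dominated by a multiple of lawU
  have hFle : ∀ g, F g ≤ (P (sG g))⁻¹ • lawU := by
    intro g
    refine Measure.le_intro (fun A hA _ => ?_)
    rw [hF, Measure.map_apply hU hA, cond_apply (hsGm g) P, hlawU, Measure.smul_apply,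
      Measure.map_apply hU hA, smul_eq_mul]
    exact mul_le_mul_right (measure_mono inter_subset_right) _
  have hFac : ∀ g, F g ≪ lawU := by
    intro g
    refine Measure.AbsolutelyContinuous.mk (fun A hA h0 => ?_)
    have := hFle g A
    rw [Measure.smul_apply, h0, smul_eq_mul, mul_zero] at this
    exact le_antisymm this zero_le
  -- the monotone CDF versions of the risk-decision curves
  set e : Fin 2 → ℝ → ℝ := fun g u => (H g (Iic (u : EReal))).toReal with he
  have hHfin : ∀ g (x : EReal), H g (Iic x) ≠ ⊤ := fun g x => (measure_lt_top _ _).ne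
  have hHle1 : ∀ g (x : EReal), H g (Iic x) ≤ 1 := fun g x => prob_le_one
  have hemono : ∀ g, Monotone (e g) := by
    intro g u v huv
    exact ENNReal.toReal_mono (hHfin g _)
      (measure_mono (Iic_subset_Iic.2 (EReal.coe_le_coe_iff.2 huv)))
  have hemeas : ∀ g, Measurable (e g) := fun g => (hemono g).measurable
  have he0 : ∀ g u, 0 ≤ e g u := fun g u => ENNReal.toReal_nonneg
  have he1 : ∀ g u, e g u ≤ 1 := by
    intro g u
    rw [he]
    exact le_trans (ENNReal.toReal_mono (by simp) (hHle1 g u)) (by simp)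
  have hgen' : ∀ g, d g =ᵐ[lawU] e g := fun g => hgen g
  have hgenF : ∀ g g', d g =ᵐ[F g'] e g := fun g g' =>
    (hgen' g).filter_mono (hFac g').ae_le
  -- integrability of the curves
  have heint : ∀ g (ρ : Measure ℝ), IsProbabilityMeasure ρ → Integrable (e g) ρ := by
    intro g ρ hρ
    refine (integrable_const (1:ℝ)).mono' ((hemeas g).aestronglyMeasurable) ?_
    exact Filter.Eventually.of_forall (fun u => by
      rw [Real.norm_eq_abs, abs_of_nonneg (he0 g u)]; exact he1 g u)
  have hdint : ∀ g g', Integrable (d g) (F g') := fun g g' =>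
    ((heint g (F g') (hFprob g')).congr (hgenF g g').symm)
  -- benchmark in real terms
  have hrate : ∀ g, (P[|sG g] sD).toReal = ∫ u, d g u ∂(F g) := by
    intro g
    show (P[|{ω | G ω = g}] {ω | D ω = 1}).toReal = ∫ u, d g u ∂((P[|{ω | G ω = g}]).map U)
    have h := hdversion g univ MeasurableSet.univ
    simpa using h
  have hcondfin : ∀ g, P[|sG g] sD ≠ ⊤ := by
    intro g
    haveI := hcondP g
    exact (measure_lt_top _ _).ne
  have hbenchR : (∫ u, d 1 u ∂(F 1)) < ∫ u, d 0 u ∂(F 0) := by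
    rw [← hrate 1, ← hrate 0]
    exact (ENNReal.toReal_lt_toReal (hcondfin 1) (hcondfin 0)).2 hbench
  -- pointwise CDF comparison from MLRP of the H's
  have hHcdf : ∀ g g', MLRP (H g) (H g') → ∀ u : ℝ, e g u ≤ e g' u := by
    intro g g' hm u
    refine ENNReal.toReal_mono (hHfin g' _) ?_
    refine le_of_cross measurableSet_Iic (mlrp_cross hm measurableSet_Iic
      measurableSet_Iic.compl (fun a ha b hb => ?_))
    exact le_trans ha (le_of_not_ge hb)
  -- CDF-ratio comparison from MLRP of the H's
  have hHratio : MLRP (H 0) (H 1) → ∀ w z : ℝ, w ≤ z → e 0 w * e 1 z ≤ e 0 z * e 1 w := by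
    intro hm w z hwz
    have := mlrp_cdf_ratio hm (EReal.coe_le_coe_iff.2 hwz)
    rw [he]
    rw [← ENNReal.toReal_mul, ← ENNReal.toReal_mul]
    exact ENNReal.toReal_mono (ENNReal.mul_ne_top (hHfin _ _) (hHfin _ _)) this
  -- the key contradiction
  have K : (∀ᵐ u ∂lawU, d 0 u ≤ d 1 u) → False := by
    intro hle
    have hleF : ∀ g', d 0 ≤ᵐ[F g'] d 1 := fun g' => hle.filter_mono (hFac g').ae_le
    rcases hlawmlrp with hFm | hFm
    · -- Case A : MLRP (F 0) (F 1); use the outcome test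
      haveI := hFprob 0
      haveI := hFprob 1
      -- monotone-ratio versions q0, q1 of the risk-decision curves
      obtain ⟨q0, q1, hq0meas, hq1meas, hq0rng, hq1rng, hq0ae, hq1ae, hqcross⟩ :
          ∃ q0 q1 : ℝ → ℝ, Measurable q0 ∧ Measurable q1 ∧
            (∀ u, 0 ≤ q0 u ∧ q0 u ≤ 1) ∧ (∀ u, 0 ≤ q1 u ∧ q1 u ≤ 1) ∧
            (d 0 =ᵐ[lawU] q0) ∧ (d 1 =ᵐ[lawU] q1) ∧
            (∀ w z : ℝ, w ≤ z → q0 w * q1 z ≤ q0 z * q1 w) := by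
        rcases hHmlrp with hm | hm
        · exact ⟨e 0, e 1, hemeas 0, hemeas 1, fun u => ⟨he0 0 u, he1 0 u⟩,
            fun u => ⟨he0 1 u, he1 1 u⟩, hgen' 0, hgen' 1, hHratio hm⟩
        · refine ⟨e 1, e 1, hemeas 1, hemeas 1, fun u => ⟨he0 1 u, he1 1 u⟩,
            fun u => ⟨he0 1 u, he1 1 u⟩, ?_, hgen' 1,
            fun w z _ => le_of_eq (mul_comm _ _)⟩
          filter_upwards [hle, hgen' 0, hgen' 1] with u h1 h2 h3
          have h4 : d 1 u ≤ d 0 u := by rw [h2, h3]; exact hHcdf 1 0 hm u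
          rw [← h3]
          exact le_antisymm (le_trans h1 (le_of_eq rfl)) h4 |>.symm ▸ (le_antisymm h4 h1) ▸ rfl
      -- the conditional decision-rate identity in ℝ≥0∞ form
      have hdvers' : ∀ g (A : Set ℝ), MeasurableSet A →
          P[|sG g] (sD ∩ U ⁻¹' A) = ∫⁻ u in A, ENNReal.ofReal (d g u) ∂(F g) := by
        intro g A hA
        haveI := hcondP g
        have h1 := hdversion g A hA
        have hset : {ω | D ω = 1 ∧ U ω ∈ A} = sD ∩ U ⁻¹' A := rfl
        have hnn : 0 ≤ᵐ[(F g).restrict A] d g :=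
          ae_restrict_of_ae ((hgenF g g).mono fun u hu => hu ▸ he0 g u)
        rw [hset, integral_eq_lintegral_of_nonneg_ae hnn
          ((hdmeas g).aestronglyMeasurable)] at h1
        have hbound : ∫⁻ u in A, ENNReal.ofReal (d g u) ∂(F g) ≤ F g A := by
          calc ∫⁻ u in A, ENNReal.ofReal (d g u) ∂(F g)
              ≤ ∫⁻ _ in A, 1 ∂(F g) := lintegral_mono_ae (ae_restrict_of_ae
                ((hgenF g g).mono fun u hu => by
                  rw [hu]; exact ENNReal.ofReal_le_one.2 (he1 g u)))
            _ = F g A := setLIntegral_one A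
        exact (ENNReal.toReal_eq_toReal_iff' ((measure_lt_top _ _).ne)
          ((lt_of_le_of_lt hbound (measure_lt_top _ _)).ne)).1 h1
      -- decision-rate bounds
      have hcrate : ∀ g, P[|sG g] sD = ∫⁻ u, ENNReal.ofReal (d g u) ∂(F g) := by
        intro g
        have := hdvers' g univ MeasurableSet.univ
        simpa using this
      have hc0 : ∀ g, P[|sG g] sD ≠ 0 := fun g => (hDpos g).ne'
      have hct : ∀ g, P[|sG g] sD ≠ ⊤ := hcondfin
      -- the conditioned (selected) laws
      set sDG : Fin 2 → Set Ω := fun g => sD ∩ sG g with hsDG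
      have hsDGm : ∀ g, MeasurableSet (sDG g) := fun g => hsDm.inter (hsGm g)
      have hPmul : ∀ g (t : Set Ω), P (sG g ∩ t) = P (sG g) * P[|sG g] t := by
        intro g t
        rw [cond_apply (hsGm g) P t, ← mul_assoc, ENNReal.mul_inv_cancel (hκ0 g) (hκt g),
          one_mul]
      have hPsDG : ∀ g, P (sDG g) = P (sG g) * P[|sG g] sD := by
        intro g
        rw [hsDG]
        simp only []
        rw [inter_comm, hPmul g sD]
      have hPsDG0 : ∀ g, P (sDG g) ≠ 0 := fun g => by
        rw [hPsDG g]; exact mul_ne_zero (hκ0 g) (hc0 g)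
      set m : Fin 2 → Measure ℝ := fun g => (P[|sDG g]).map U with hm
      haveI hcondDG : ∀ g, IsProbabilityMeasure (P[|sDG g]) := fun g =>
        cond_isProbabilityMeasure (hPsDG0 g)
      have hmprob : ∀ g, IsProbabilityMeasure (m g) := fun g => by
        haveI := hcondDG g
        exact Measure.isProbabilityMeasure_map hU.aemeasurable
      haveI := hmprob 0
      haveI := hmprob 1
      -- formula for m g on measurable sets
      have hmapply : ∀ g (A : Set ℝ), MeasurableSet A →
          m g A = (P[|sG g] sD)⁻¹ * ∫⁻ u in A, ENNReal.ofReal (d g u) ∂(F g) := by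
        intro g A hA
        rw [hm]
        simp only []
        rw [Measure.map_apply hU hA, cond_apply (hsDGm g) P]
        have hseteq : sDG g ∩ U ⁻¹' A = sG g ∩ (sD ∩ U ⁻¹' A) := by
          rw [hsDG]; simp only []; rw [inter_comm sD (sG g), inter_assoc]
        rw [hseteq, hPmul g (sD ∩ U ⁻¹' A), hdvers' g A hA, hPsDG g,
          ENNReal.mul_inv (Or.inl (hκ0 g)) (Or.inl (hκt g)), mul_mul_mul_comm,
          ENNReal.inv_mul_cancel (hκ0 g) (hκt g), one_mul]
      -- replace d by q in the lintegrals
      have hlcongr : ∀ g (q : ℝ → ℝ), (d g =ᵐ[lawU] q) → ∀ (A : Set ℝ),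
          ∫⁻ u in A, ENNReal.ofReal (d g u) ∂(F g) =
            ∫⁻ u in A, ENNReal.ofReal (q u) ∂(F g) := by
        intro g q hq A
        refine lintegral_congr_ae (ae_restrict_of_ae ?_)
        exact (hq.filter_mono (hFac g).ae_le).mono fun u hu => by dsimp only; rw [hu]
      -- the cross inequality for the selected laws
      have hmcross : ∀ (A B : Set ℝ), MeasurableSet A → MeasurableSet B →
          (∀ a ∈ A, ∀ b ∈ B, a ≤ b) → m 0 A * m 1 B ≤ m 0 B * m 1 A := by
        intro A B hA hB hAB
        rw [hmapply 0 A hA, hmapply 1 B hB, hmapply 0 B hB, hmapply 1 A hA,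
          hlcongr 0 q0 hq0ae A, hlcongr 1 q1 hq1ae B, hlcongr 0 q0 hq0ae B,
          hlcongr 1 q1 hq1ae A]
        have hqcross' : ∀ w z : ℝ, w ≤ z →
            ENNReal.ofReal (q0 w) * ENNReal.ofReal (q1 z) ≤
              ENNReal.ofReal (q0 z) * ENNReal.ofReal (q1 w) := by
          intro w z hwz
          rw [← ENNReal.ofReal_mul (hq0rng w).1, ← ENNReal.ofReal_mul (hq0rng z).1]
          exact ENNReal.ofReal_le_ofReal (hqcross w z hwz)
        have hw := mlrp_cross_weighted hFm
          (ENNReal.measurable_ofReal.comp hq0meas) (ENNReal.measurable_ofReal.comp hq1meas)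
          hqcross' hA hB hAB
        calc ((P[|sG 0] sD)⁻¹ * ∫⁻ u in A, ENNReal.ofReal (q0 u) ∂(F 0)) *
              ((P[|sG 1] sD)⁻¹ * ∫⁻ u in B, ENNReal.ofReal (q1 u) ∂(F 1))
            = ((P[|sG 0] sD)⁻¹ * (P[|sG 1] sD)⁻¹) *
              ((∫⁻ u in A, ENNReal.ofReal (q0 u) ∂(F 0)) *
                ∫⁻ u in B, ENNReal.ofReal (q1 u) ∂(F 1)) := by ring
          _ ≤ ((P[|sG 0] sD)⁻¹ * (P[|sG 1] sD)⁻¹) *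
              ((∫⁻ u in B, ENNReal.ofReal (q0 u) ∂(F 0)) *
                ∫⁻ u in A, ENNReal.ofReal (q1 u) ∂(F 1)) := mul_le_mul_right hw _
          _ = ((P[|sG 0] sD)⁻¹ * ∫⁻ u in B, ENNReal.ofReal (q0 u) ∂(F 0)) *
              ((P[|sG 1] sD)⁻¹ * ∫⁻ u in A, ENNReal.ofReal (q1 u) ∂(F 1)) := by ring
      -- stochastic dominance of the selected laws
      have hmlower : ∀ (L : Set ℝ), IsLowerSet L → m 0 L ≤ m 1 L := by
        intro L hL
        have hLm := isLowerSet_measurable hL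
        exact le_of_cross hLm (hmcross L Lᶜ hLm hLm.compl (isLowerSet_le_compl hL))
      have hmupper : ∀ (L : Set ℝ), IsLowerSet L → m 1 Lᶜ ≤ m 0 Lᶜ := by
        intro L hL
        have hLm := isLowerSet_measurable hL
        rw [prob_compl_eq_one_sub hLm, prob_compl_eq_one_sub hLm]
        exact tsub_le_tsub_left (hmlower L hL) 1
      -- integrability of the identity
      have hidint : Integrable (fun u : ℝ => u) lawU :=
        (integrable_map_measure aestronglyMeasurable_id hU.aemeasurable).2 hUint
      have hmle : ∀ g, m g ≤ ((P[|sG g] sD)⁻¹ * (P (sG g))⁻¹) • lawU := by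
        intro g
        refine Measure.le_intro fun A hA _ => ?_
        rw [hmapply g A hA, Measure.smul_apply, smul_eq_mul, mul_assoc]
        refine mul_le_mul_right ?_ _
        have h1 : ∫⁻ u in A, ENNReal.ofReal (d g u) ∂(F g) ≤ F g A := by
          calc ∫⁻ u in A, ENNReal.ofReal (d g u) ∂(F g)
              ≤ ∫⁻ _ in A, 1 ∂(F g) := lintegral_mono_ae (ae_restrict_of_ae
                ((hgenF g g).mono fun u hu => by
                  rw [hu]; exact ENNReal.ofReal_le_one.2 (he1 g u)))
            _ = F g A := setLIntegral_one A
        refine le_trans h1 ?_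
        have := hFle g A
        rwa [Measure.smul_apply, smul_eq_mul] at this
      have hmint : ∀ g, Integrable (fun u : ℝ => u) (m g) := by
        intro g
        refine Integrable.mono_measure ?_ (hmle g)
        exact hidint.smul_measure (ENNReal.mul_ne_top
          (ENNReal.inv_ne_top.2 (hc0 g)) (ENNReal.inv_ne_top.2 (hκ0 g)))
      -- compare positive parts
      have hEpos : ∫ u, (u ⊔ 0) ∂(m 1) ≤ ∫ u, (u ⊔ 0) ∂(m 0) := by
        refine integral_le_of_meas_lt_le (fun u => le_sup_right)
          ((measurable_id.sup measurable_const).aemeasurable)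
          ((measurable_id.sup measurable_const).aemeasurable)
          (hmint 1).pos_part (hmint 0).pos_part ?_
        intro t ht
        have hset : {a : ℝ | t < a ⊔ 0} = (Iic t)ᶜ := by
          ext a
          simp only [mem_setOf_eq, lt_sup_iff, mem_compl_iff, mem_Iic, not_le]
          constructor
          · rintro (h | h)
            · exact h
            · exact absurd h (not_lt.2 (le_of_lt ht))
          · exact Or.inl
        rw [hset]
        exact hmupper (Iic t) (isLowerSet_Iic t)
      -- compare negative parts
      have hEneg : ∫ u, (-u ⊔ 0) ∂(m 0) ≤ ∫ u, (-u ⊔ 0) ∂(m 1) := by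
        refine integral_le_of_meas_lt_le (fun u => le_sup_right)
          ((measurable_id.neg.sup measurable_const).aemeasurable)
          ((measurable_id.neg.sup measurable_const).aemeasurable)
          ((hmint 0).neg.pos_part) ((hmint 1).neg.pos_part) ?_
        intro t ht
        have hset : {a : ℝ | t < -a ⊔ 0} = Iio (-t) := by
          ext a
          simp only [mem_setOf_eq, lt_sup_iff, mem_Iio]
          constructor
          · rintro (h | h)
            · linarith
            · exact absurd h (not_lt.2 (le_of_lt ht))
          · intro h; exact Or.inl (by linarith)
        rw [hset]
        exact hmlower (Iio (-t)) (isLowerSet_Iio (-t))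
      -- sum up: the selected expectation for group 0 dominates
      have hid_eq : ∀ (ρ : Measure ℝ), Integrable (fun u : ℝ => u) ρ →
          ∫ u, u ∂ρ = (∫ u, (u ⊔ 0) ∂ρ) - ∫ u, (-u ⊔ 0) ∂ρ := by
        intro ρ hρ
        have hsub := integral_sub hρ.pos_part hρ.neg.pos_part
        simp only [Pi.neg_apply] at hsub
        rw [← hsub]
        refine integral_congr_ae (Filter.Eventually.of_forall fun u => ?_)
        dsimp only
        rcases le_total u 0 with h | h
        · rw [sup_eq_right.2 h, sup_eq_left.2 (neg_nonneg.2 h)]; ring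
        · rw [sup_eq_left.2 h, sup_eq_right.2 (neg_nonpos.2 h)]; ring
      have hE : ∫ u, u ∂(m 1) ≤ ∫ u, u ∂(m 0) := by
        rw [hid_eq _ (hmint 1), hid_eq _ (hmint 0)]
        linarith
      -- transfer the outcome test
      have hout : ∀ g, (∫ ω, U ω ∂P[|{ω | D ω = 1 ∧ G ω = g}]) = ∫ u, u ∂(m g) := by
        intro g
        haveI := hcondDG g
        have hseteq : {ω | D ω = 1 ∧ G ω = g} = sDG g := rfl
        rw [hseteq, hm]
        exact (integral_map hU.aemeasurable aestronglyMeasurable_id).symm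
      rw [hout 0, hout 1] at houtcome
      linarith
    · -- Case B : MLRP (F 1) (F 0); use the benchmark test
      haveI := hFprob 0
      haveI := hFprob 1
      have hup : ∀ t : ℝ, F 0 {a | t < e 1 a} ≤ F 1 {a | t < e 1 a} := by
        intro t
        have hL : IsLowerSet {a : ℝ | e 1 a ≤ t} := fun a b hba ha => le_trans (hemono 1 hba) ha
        have hLm := isLowerSet_measurable hL
        have h1 : F 1 {a : ℝ | e 1 a ≤ t} ≤ F 0 {a : ℝ | e 1 a ≤ t} :=
          le_of_cross hLm (mlrp_cross hFm hLm hLm.compl (isLowerSet_le_compl hL))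
        have hset : {a : ℝ | t < e 1 a} = {a : ℝ | e 1 a ≤ t}ᶜ := by ext a; simp [not_le]
        rw [hset, prob_compl_eq_one_sub hLm, prob_compl_eq_one_sub hLm]
        exact tsub_le_tsub_left h1 1
      have hchain : ∫ u, e 1 u ∂(F 0) ≤ ∫ u, e 1 u ∂(F 1) :=
        integral_le_of_meas_lt_le (he0 1) (hemeas 1).aemeasurable (hemeas 1).aemeasurable
          (heint 1 (F 0) (hFprob 0)) (heint 1 (F 1) (hFprob 1)) (fun t _ => hup t)
      have h2 : ∫ u, d 0 u ∂(F 0) ≤ ∫ u, d 1 u ∂(F 0) :=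
        integral_mono_ae (hdint 0 0) (hdint 1 0) (hleF 0)
      have h3 : ∫ u, d 1 u ∂(F 0) = ∫ u, e 1 u ∂(F 0) := integral_congr_ae (hgenF 1 0)
      have h4 : ∫ u, e 1 u ∂(F 1) = ∫ u, d 1 u ∂(F 1) := integral_congr_ae (hgenF 1 1).symm
      linarith [hbenchR]
  constructor
  · rcases hHmlrp with hm | hm
    · exact absurd ((hgen' 0).mp (((hgen' 1).mono (fun u h1 => by
        intro h0
        rw [h0, h1]
        exact hHcdf 0 1 hm u)))) K
    · filter_upwards [hgen' 0, hgen' 1] with u h0 h1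
      rw [h0, h1]
      exact hHcdf 1 0 hm u
  · rw [pos_iff_ne_zero]
    intro h0
    refine K ?_
    rw [ae_iff]
    convert h0 using 2
    ext u
    simp [not_le]
end

section
/- Let μ be a Borel probability measure on ℝ and let d : ℝ → ℝ be a function such that, outside a μ-null set, d is non-decreasing, right-continuous, and takes values in [0,1]. Then there exists a function F : ℝ → [0,1] that is non-decreasing and right-continuous on all of ℝ and satisfies F(u) = d(u) for μ-almost every u. (Equivalently, d agrees μ-a.e. with the cumulative distribution function of a probability distribution on the extended reals ℝ ∪ {−∞, +∞}.) -/
open MeasureTheory Set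

/-- **Lemma A.1.**  Let `μ` be a Borel probability measure on `ℝ` and let `d : ℝ → ℝ` be
such that, outside a `μ`-null set `S`, `d` is `[0,1]`-valued, non-decreasing, and
right-continuous (along the complement of `S`).  Then there is a function `F : ℝ → [0,1]`
that is non-decreasing and right-continuous on all of `ℝ` and agrees with `d`
`μ`-almost everywhere.  (Equivalently, `d` agrees `μ`-a.e. with the CDF of a probability
distribution on the extended reals.) -/
theorem riskDecisionCurve_generates_distribution
    (μ : Measure ℝ) [IsProbabilityMeasure μ] (d : ℝ → ℝ)
    (h : ∃ S : Set ℝ, μ S = 0 ∧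
      (∀ x, x ∉ S → d x ∈ Icc (0:ℝ) 1) ∧
      (∀ x, x ∉ S → ∀ y, y ∉ S → x ≤ y → d x ≤ d y) ∧
      (∀ x, x ∉ S → ContinuousWithinAt d (Ici x ∩ Sᶜ) x)) :
    ∃ F : ℝ → ℝ, (∀ x, F x ∈ Icc (0:ℝ) 1) ∧ Monotone F ∧
      (∀ x, ContinuousWithinAt F (Ici x) x) ∧ ∀ᵐ u ∂μ, F u = d u := by
  classical
  obtain ⟨S, hS0, hmem, hmono, hrc⟩ := h
  set F0 : ℝ → ℝ := fun t => sSup (insert 0 (d '' {y | y ∉ S ∧ y ≤ t})) with hF0def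
  set F : ℝ → ℝ := fun x => sInf (F0 '' Ioi x) with hFdef
  have hbddA : ∀ t, BddAbove (insert (0:ℝ) (d '' {y | y ∉ S ∧ y ≤ t})) := by
    intro t
    refine ⟨1, ?_⟩
    rintro a (rfl | ⟨y, ⟨hy, _⟩, rfl⟩)
    · norm_num
    · exact (hmem y hy).2
  have hF0_nonneg : ∀ t, 0 ≤ F0 t := fun t => le_csSup (hbddA t) (mem_insert _ _)
  have hF0_le_one : ∀ t, F0 t ≤ 1 := by
    intro t
    apply Real.sSup_le _ zero_le_one
    rintro a (rfl | ⟨y, ⟨hy, _⟩, rfl⟩)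
    · exact zero_le_one
    · exact (hmem y hy).2
  have hF0_mono : Monotone F0 := by
    intro a b hab
    apply csSup_le_csSup (hbddA b) ⟨0, mem_insert _ _⟩
    rintro c (rfl | ⟨y, ⟨hy, hyt⟩, rfl⟩)
    · exact mem_insert _ _
    · exact mem_insert_of_mem _ ⟨y, ⟨hy, hyt.trans hab⟩, rfl⟩
  have hne : ∀ x : ℝ, (F0 '' Ioi x).Nonempty := fun x =>
    ⟨F0 (x + 1), ⟨x + 1, by simp, rfl⟩⟩
  have hbddB : ∀ x : ℝ, BddBelow (F0 '' Ioi x) := by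
    intro x
    exact ⟨0, by rintro a ⟨t, _, rfl⟩; exact hF0_nonneg t⟩
  have hF_le : ∀ x t, x < t → F x ≤ F0 t := fun x t hxt =>
    csInf_le (hbddB x) ⟨t, hxt, rfl⟩
  have hF_nonneg : ∀ x, 0 ≤ F x := by
    intro x
    apply le_csInf (hne x)
    rintro a ⟨t, _, rfl⟩
    exact hF0_nonneg t
  have hF_le_one : ∀ x, F x ≤ 1 :=
    fun x => (hF_le x (x + 1) (by linarith)).trans (hF0_le_one _)
  have hF_mono : Monotone F := by
    intro a b hab
    exact csInf_le_csInf (hbddB a) (hne b)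
      (image_mono (fun t ht => lt_of_le_of_lt hab ht))
  refine ⟨F, fun x => ⟨hF_nonneg x, hF_le_one x⟩, hF_mono, ?_, ?_⟩
  · -- right continuity
    intro x
    rw [Metric.continuousWithinAt_iff]
    intro ε hε
    obtain ⟨a, ⟨t, ht, rfl⟩, hlt⟩ :=
      exists_lt_of_csInf_lt (hne x) (lt_add_of_pos_right (F x) hε)
    refine ⟨t - x, by simpa using ht, ?_⟩
    intro s hs hds
    rw [Real.dist_eq] at hds ⊢
    have hxs : x ≤ s := hs
    have hst : s < t := by
      rw [abs_of_nonneg (by linarith)] at hds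
      linarith
    have h1 : F s ≤ F0 t := hF_le s t hst
    have h2 : F x ≤ F s := hF_mono hxs
    rw [abs_lt]
    constructor <;> linarith
  · -- a.e. equality
    have key : ∀ x, x ∉ S → F x = d x := by
      intro x hx
      have hge : d x ≤ F x := by
        apply le_csInf (hne x)
        rintro a ⟨t, hxt, rfl⟩
        exact le_csSup (hbddA t) (mem_insert_of_mem _ ⟨x, ⟨hx, le_of_lt hxt⟩, rfl⟩)
      refine le_antisymm ?_ hge
      apply le_of_forall_pos_le_add
      intro ε hε
      have hrcx := hrc x hx
      rw [Metric.continuousWithinAt_iff] at hrcx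
      obtain ⟨δ, hδ, hδ'⟩ := hrcx ε hε
      have h0 : 0 ≤ d x := (hmem x hx).1
      have hstep : F0 (x + δ / 2) ≤ d x + ε := by
        apply Real.sSup_le _ (by linarith)
        rintro a (rfl | ⟨y, ⟨hy, hyt⟩, rfl⟩)
        · linarith
        · rcases le_or_gt y x with hyx | hyx
          · have := hmono y hy x hx hyx
            linarith
          · have hmemy : y ∈ Ici x ∩ Sᶜ := ⟨le_of_lt hyx, hy⟩
            have hdy : dist y x < δ := by
              rw [Real.dist_eq, abs_of_nonneg (by linarith)]
              linarith
            have := hδ' hmemy hdy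
            rw [Real.dist_eq, abs_lt] at this
            linarith
      calc F x ≤ F0 (x + δ / 2) := hF_le x _ (by linarith)
        _ ≤ d x + ε := hstep
    have hsub : {u | ¬ F u = d u} ⊆ S := by
      intro u hu
      by_contra hc
      exact hu (key u hc)
    exact measure_mono_null hsub hS0
end

section
/- Let X and Y be real-valued random variables. Then law(X) ≽_lr law(Y) (the monotone likelihood ratio property with law(X) dominating) holds if and only if for every Borel set E with Pr(X ∈ E) > 0 and Pr(Y ∈ E) > 0, the conditional distribution of X given X ∈ E first-order stochastically dominates the conditional distribution of Y given Y ∈ E (uniform conditional stochastic dominance). -/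
open MeasureTheory ProbabilityTheory Set
open scoped ENNReal

lemma meas_eq_int (μ ν : Measure ℝ) [IsFiniteMeasure μ] [IsFiniteMeasure ν] (A : Set ℝ) (hA : MeasurableSet A) :
    μ A = ∫⁻ x in A, μ.rnDeriv (μ + ν) x ∂(μ + ν) := by
  conv_lhs => rw [← Measure.withDensity_rnDeriv_eq μ (μ + ν)
    (Measure.absolutelyContinuous_of_le (Measure.le_add_right le_rfl))]
  rw [withDensity_apply _ hA]

lemma meas_eq_int' (μ ν : Measure ℝ) [IsFiniteMeasure μ] [IsFiniteMeasure ν] (A : Set ℝ) (hA : MeasurableSet A) :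
    ν A = ∫⁻ x in A, ν.rnDeriv (μ + ν) x ∂(μ + ν) := by
  conv_lhs => rw [← Measure.withDensity_rnDeriv_eq ν (μ + ν)
    (Measure.absolutelyContinuous_of_le (Measure.le_add_left le_rfl))]
  rw [withDensity_apply _ hA]

lemma dens_add_one (μ ν : Measure ℝ) [IsFiniteMeasure μ] [IsFiniteMeasure ν] : ∀ᵐ x ∂(μ + ν), μ.rnDeriv (μ + ν) x + ν.rnDeriv (μ + ν) x = 1 := by
  have h1 := Measure.rnDeriv_add μ ν (μ + ν)
  have h2 := Measure.rnDeriv_self (μ + ν)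
  filter_upwards [h1, h2] with x hx1 hx2
  simp only [Pi.add_apply] at hx1
  rw [← hx1]
  exact hx2

lemma cross_of_mono (μ ν : Measure ℝ) [IsFiniteMeasure μ] [IsFiniteMeasure ν] (S : Set ℝ) (hS : (μ + ν) S = 0)
    (hmono : ∀ x, x ∉ S → ∀ y, y ∉ S → x ≤ y →
      μ.rnDeriv (μ + ν) x / ν.rnDeriv (μ + ν) x ≤ μ.rnDeriv (μ + ν) y / ν.rnDeriv (μ + ν) y)
    (E : Set ℝ) (hE : MeasurableSet E) (t : ℝ) :
    μ (E ∩ Iic t) * ν (E ∩ Ioi t) ≤ ν (E ∩ Iic t) * μ (E ∩ Ioi t) := by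
  set f := μ.rnDeriv (μ + ν) with hf
  set g := ν.rnDeriv (μ + ν) with hg
  have hfm : Measurable f := Measure.measurable_rnDeriv μ (μ + ν)
  have hgm : Measurable g := Measure.measurable_rnDeriv ν (μ + ν)
  set N : Set ℝ := toMeasurable (μ + ν) S ∪ {x | ¬ (f x + g x = 1)} with hN
  have hNm : MeasurableSet N :=
    (measurableSet_toMeasurable _ _).union
      ((hfm.add hgm) (measurableSet_singleton 1)).compl
  have hNnull : (μ + ν) N = 0 := by
    apply measure_union_null
    · rwa [measure_toMeasurable]
    · exact (ae_iff.mp (dens_add_one μ ν))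
  have hμN : μ N = 0 := le_antisymm (hNnull ▸ Measure.le_add_right le_rfl N) zero_le
  have hνN : ν N = 0 := le_antisymm (hNnull ▸ Measure.le_add_left le_rfl N) zero_le
  set A : Set ℝ := (E ∩ Iic t) \ N with hA
  set B : Set ℝ := (E ∩ Ioi t) \ N with hB
  have hAm : MeasurableSet A := (hE.inter measurableSet_Iic).diff hNm
  have hBm : MeasurableSet B := (hE.inter measurableSet_Ioi).diff hNm
  have hμA : μ A = μ (E ∩ Iic t) := measure_diff_null hμN
  have hνA : ν A = ν (E ∩ Iic t) := measure_diff_null hνN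
  have hμB : μ B = μ (E ∩ Ioi t) := measure_diff_null hμN
  have hνB : ν B = ν (E ∩ Ioi t) := measure_diff_null hνN
  have hone : ∀ x, x ∈ A ∪ B → f x + g x = 1 := by
    rintro x (hx | hx) <;>
      exact not_not.mp fun hc => hx.2 (Or.inr hc)
  have hnotS : ∀ x, x ∈ A ∪ B → x ∉ S := by
    rintro x (hx | hx) <;>
      exact fun hc => hx.2 (Or.inl (subset_toMeasurable _ _ hc))
  have key : ∀ x ∈ A, ∀ y ∈ B, f x / g x ≤ f y / g y := by
    intro x hx y hy
    exact hmono x (hnotS x (Or.inl hx)) y (hnotS y (Or.inr hy))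
      (le_trans hx.1.2 (le_of_lt hy.1.2))
  set c : ℝ≥0∞ := ⨅ y ∈ B, f y / g y with hc
  have hAc : ∀ x ∈ A, f x / g x ≤ c := fun x hx => le_iInf₂ fun y hy => key x hx y hy
  have hcB : ∀ y ∈ B, c ≤ f y / g y := fun y hy => biInf_le _ hy
  rw [← hμA, ← hνA, ← hμB, ← hνB]
  by_cases hc0 : c = 0
  · -- f = 0 on A, so μ A = 0
    have hfA : ∀ x ∈ A, f x = 0 := by
      intro x hx
      have h0 : f x / g x = 0 := le_antisymm (hc0 ▸ hAc x hx) zero_le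
      rcases ENNReal.div_eq_zero_iff.mp h0 with h | h
      · exact h
      · exfalso
        have := hone x (Or.inl hx)
        rw [h] at this
        simp at this
    have : μ A = 0 := by
      rw [meas_eq_int μ ν A hAm]
      rw [setLIntegral_eq_zero_iff hAm hfm]
      exact Filter.Eventually.of_forall fun x hx => hfA x hx
    simp [this]
  by_cases hctop : c = ⊤
  · -- g = 0 on B, so ν B = 0
    have hgB : ∀ y ∈ B, g y = 0 := by
      intro y hy
      have htop : f y / g y = ⊤ := top_unique (hctop ▸ hcB y hy)
      rcases ENNReal.div_eq_top.mp htop with ⟨_, h⟩ | ⟨h, _⟩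
      · exact h
      · exfalso
        have := hone y (Or.inr hy)
        rw [h] at this
        simp at this
    have : ν B = 0 := by
      rw [meas_eq_int' μ ν B hBm]
      rw [setLIntegral_eq_zero_iff hBm hgm]
      exact Filter.Eventually.of_forall fun y hy => hgB y hy
    simp [this]
  -- main case 0 < c < ⊤
  have hgfin : ∀ x, x ∈ A ∪ B → g x ≠ ⊤ := by
    intro x hx hc'
    have := hone x hx
    rw [hc'] at this
    simp at this
  have hfA' : ∀ x ∈ A, f x ≤ c * g x := by
    intro x hx
    by_cases hg0 : g x = 0
    · exfalso
      have hf1 : f x = 1 := by have := hone x (Or.inl hx); rwa [hg0, add_zero] at this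
      have : f x / g x = ⊤ := by rw [hg0, hf1]; simp
      exact hctop (top_unique (this ▸ hAc x hx))
    · exact (ENNReal.div_le_iff hg0 (hgfin x (Or.inl hx))).mp (hAc x hx)
  have hgB' : ∀ y ∈ B, c * g y ≤ f y := by
    intro y hy
    by_cases hg0 : g y = 0
    · simp [hg0]
    · exact (ENNReal.le_div_iff_mul_le (Or.inl hg0) (Or.inl (hgfin y (Or.inr hy)))).mp (hcB y hy)
  have h1 : μ A ≤ c * ν A := by
    rw [meas_eq_int μ ν A hAm, meas_eq_int' μ ν A hAm, ← lintegral_const_mul c hgm]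
    exact setLIntegral_mono (measurable_const.mul hgm) hfA'
  have h2 : c * ν B ≤ μ B := by
    rw [meas_eq_int μ ν B hBm, meas_eq_int' μ ν B hBm, ← lintegral_const_mul c hgm]
    exact setLIntegral_mono hfm hgB'
  calc μ A * ν B ≤ (c * ν A) * ν B := mul_le_mul_left h1 _
    _ = ν A * (c * ν B) := by ring
    _ ≤ ν A * μ B := mul_le_mul_right h2 _

lemma cond_of_cross (μ ν : Measure ℝ) [IsFiniteMeasure μ] [IsFiniteMeasure ν]
    (E : Set ℝ) (hE : MeasurableSet E) (t : ℝ)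
    (hμE : 0 < μ E) (hνE : 0 < ν E)
    (hcross : μ (E ∩ Iic t) * ν (E ∩ Ioi t) ≤ ν (E ∩ Iic t) * μ (E ∩ Ioi t)) :
    (μ[|E]) (Iic t) ≤ (ν[|E]) (Iic t) := by
  rw [cond_apply hE, cond_apply hE]
  have hsplit : ∀ (κ : Measure ℝ), κ E = κ (E ∩ Iic t) + κ (E ∩ Ioi t) := by
    intro κ
    rw [← measure_union (Disjoint.mono inter_subset_right inter_subset_right
      (Iic_disjoint_Ioi le_rfl)) (hE.inter measurableSet_Ioi)]
    congr 1
    rw [← inter_union_distrib_left, Iic_union_Ioi, inter_univ]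
  have hkey : μ (E ∩ Iic t) * ν E ≤ ν (E ∩ Iic t) * μ E := by
    rw [hsplit μ, hsplit ν, mul_add, mul_add]
    exact add_le_add (le_of_eq (mul_comm _ _)) hcross
  rw [← ENNReal.div_eq_inv_mul, ← ENNReal.div_eq_inv_mul]
  rw [ENNReal.div_le_iff hμE.ne' (measure_ne_top μ E)]
  rw [div_eq_mul_inv, mul_right_comm, ← div_eq_mul_inv]
  rw [ENNReal.le_div_iff_mul_le (Or.inl hνE.ne') (Or.inl (measure_ne_top ν E))]
  exact hkey

lemma mlrp_of_ucsd (μ ν : Measure ℝ) [IsProbabilityMeasure μ] [IsProbabilityMeasure ν]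
    (H : ∀ E : Set ℝ, MeasurableSet E → 0 < μ E → 0 < ν E →
      ∀ t : ℝ, (μ[|E]) (Iic t) ≤ (ν[|E]) (Iic t)) :
    MLRP μ ν := by
  classical
  set f := μ.rnDeriv (μ + ν) with hf
  set g := ν.rnDeriv (μ + ν) with hg
  have hfm : Measurable f := Measure.measurable_rnDeriv μ (μ + ν)
  have hgm : Measurable g := Measure.measurable_rnDeriv ν (μ + ν)
  have hhm : Measurable (fun x => f x / g x) := hfm.div hgm
  set N0 : Set ℝ := {x | ¬ (f x + g x = 1)} with hN0
  have hN0m : MeasurableSet N0 := ((hfm.add hgm) (measurableSet_singleton 1)).compl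
  have hN0null : (μ + ν) N0 = 0 := ae_iff.mp (dens_add_one μ ν)
  -- rational embedding into ℝ≥0∞
  set e : ℚ → ℝ≥0∞ := fun p => ENNReal.ofReal (p : ℝ) with he
  set A : ℚ → ℚ → Set ℝ := fun q t => ({x | e q < f x / g x} ∩ Iic (t : ℝ)) \ N0 with hA
  set B : ℚ → ℚ → Set ℝ := fun p t => ({x | f x / g x < e p} ∩ Ioi (t : ℝ)) \ N0 with hB
  have hAm : ∀ q t, MeasurableSet (A q t) := fun q t =>
    ((measurableSet_lt measurable_const hhm).inter measurableSet_Iic).diff hN0m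
  have hBm : ∀ p t, MeasurableSet (B p t) := fun p t =>
    ((measurableSet_lt hhm measurable_const).inter measurableSet_Ioi).diff hN0m
  -- main claim
  have key : ∀ p q t : ℚ, 0 < p → p < q →
      (μ + ν) (A q t) = 0 ∨ (μ + ν) (B p t) = 0 := by
    intro p q t hp hpq
    by_contra hcon
    push_neg at hcon
    obtain ⟨hAn, hBn⟩ := hcon
    have hApos : 0 < (μ + ν) (A q t) := pos_iff_ne_zero.mpr hAn
    have hBpos : 0 < (μ + ν) (B p t) := pos_iff_ne_zero.mpr hBn
    have hq : 0 < q := lt_trans hp hpq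
    have hep0 : e p ≠ 0 :=
      (ENNReal.ofReal_pos.mpr (by exact_mod_cast hp : (0:ℝ) < (p:ℝ))).ne'
    have heq0 : e q ≠ 0 :=
      (ENNReal.ofReal_pos.mpr (by exact_mod_cast hq : (0:ℝ) < (q:ℝ))).ne'
    have heptop : e p ≠ ⊤ := ENNReal.ofReal_ne_top
    have heqtop : e q ≠ ⊤ := ENNReal.ofReal_ne_top
    have hepq : e p < e q :=
      ENNReal.ofReal_lt_ofReal_iff'.mpr
        ⟨by exact_mod_cast hpq, by exact_mod_cast hq⟩
    set E : Set ℝ := A q t ∪ B p t with hE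
    have hEm : MeasurableSet E := (hAm q t).union (hBm p t)
    have hone : ∀ x, x ∈ E → f x + g x = 1 := by
      rintro x (hx | hx) <;> exact not_not.mp hx.2
    have hgfin : ∀ x ∈ E, g x ≠ ⊤ := by
      intro x hx hc
      have := hone x hx
      rw [hc] at this
      simp at this
    have hffin : ∀ x ∈ E, f x ≠ ⊤ := by
      intro x hx hc
      have := hone x hx
      rw [hc] at this
      simp at this
    -- f positive on A
    have hfpos : ∀ x ∈ A q t, f x ≠ 0 := by
      intro x hx hc
      have hlt' : e q < f x / g x := hx.1.1
      rw [hc, ENNReal.zero_div] at hlt'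
      exact (not_lt_of_ge zero_le) hlt'
    -- g positive on B
    have hgpos : ∀ x ∈ B p t, g x ≠ 0 := by
      intro x hx hc
      have hf1 : f x = 1 := by have := hone x (Or.inr hx); rwa [hc, add_zero] at this
      have htp : f x / g x = ⊤ := by rw [hc, hf1]; simp
      have hlt' : f x / g x < e p := hx.1.1
      rw [htp] at hlt'
      exact not_top_lt hlt'
    -- μ (A q t) > 0
    have hμA : 0 < μ (A q t) := by
      rcases eq_or_lt_of_le (zero_le : 0 ≤ μ (A q t)) with h0 | h
      · exfalso
        rw [meas_eq_int μ ν _ (hAm q t)] at h0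
        rw [eq_comm, setLIntegral_eq_zero_iff (hAm q t) hfm] at h0
        have : ∀ᵐ x ∂(μ + ν), x ∉ A q t := by
          filter_upwards [h0] with x hx hmem
          exact hfpos x hmem (hx hmem)
        rw [← measure_eq_zero_iff_ae_notMem] at this
        exact hAn this
      · exact h
    have hνB : 0 < ν (B p t) := by
      rcases eq_or_lt_of_le (zero_le : 0 ≤ ν (B p t)) with h0 | h
      · exfalso
        rw [meas_eq_int' μ ν _ (hBm p t)] at h0
        rw [eq_comm, setLIntegral_eq_zero_iff (hBm p t) hgm] at h0
        have : ∀ᵐ x ∂(μ + ν), x ∉ B p t := by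
          filter_upwards [h0] with x hx hmem
          exact hgpos x hmem (hx hmem)
        rw [← measure_eq_zero_iff_ae_notMem] at this
        exact hBn this
      · exact h
    have hμE : 0 < μ E := lt_of_lt_of_le hμA (measure_mono subset_union_left)
    have hνE : 0 < ν E := lt_of_lt_of_le hνB (measure_mono subset_union_right)
    -- apply UCSD
    have h := H E hEm hμE hνE (t : ℝ)
    rw [cond_apply hEm, cond_apply hEm, ← ENNReal.div_eq_inv_mul, ← ENNReal.div_eq_inv_mul,
      ENNReal.div_le_iff hμE.ne' (measure_ne_top μ E), div_eq_mul_inv, mul_right_comm,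
      ← div_eq_mul_inv, ENNReal.le_div_iff_mul_le (Or.inl hνE.ne')
      (Or.inl (measure_ne_top ν E))] at h
    -- E ∩ Iic t = A q t
    have hEA : E ∩ Iic (t : ℝ) = A q t := by
      rw [hE, union_inter_distrib_right]
      have h1 : A q t ∩ Iic (t : ℝ) = A q t :=
        inter_eq_left.mpr fun x hx => hx.1.2
      have h2 : B p t ∩ Iic (t : ℝ) = ∅ := by
        apply eq_empty_iff_forall_notMem.mpr
        rintro x ⟨hx, hle⟩
        exact not_le_of_gt (mem_Ioi.mp hx.1.2) (mem_Iic.mp hle)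
      rw [h1, h2, union_empty]
    rw [hEA] at h
    -- split measures
    have hdisj : Disjoint (A q t) (B p t) :=
      Disjoint.mono (diff_subset.trans inter_subset_right)
        (diff_subset.trans inter_subset_right) (Iic_disjoint_Ioi le_rfl)
    have hsplitμ : μ E = μ (A q t) + μ (B p t) := measure_union hdisj (hBm p t)
    have hsplitν : ν E = ν (A q t) + ν (B p t) := measure_union hdisj (hBm p t)
    rw [hsplitμ, hsplitν, mul_add, mul_add, mul_comm (ν (A q t)) (μ (A q t))] at h
    have hcross : μ (A q t) * ν (B p t) ≤ ν (A q t) * μ (B p t) :=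
      (ENNReal.add_le_add_iff_left
        (ENNReal.mul_ne_top (measure_ne_top μ _) (measure_ne_top ν _))).mp h
    -- pointwise bounds
    have hgleA : ∀ x ∈ A q t, g x ≤ (e q)⁻¹ * f x := by
      intro x hx
      by_cases hg0 : g x = 0
      · rw [hg0]; exact zero_le
      · have hle : e q * g x ≤ f x :=
          (ENNReal.le_div_iff_mul_le (Or.inl hg0)
            (Or.inl (hgfin x (Or.inl hx)))).mp (le_of_lt hx.1.1)
        calc g x = (e q)⁻¹ * (e q * g x) := by
              rw [← mul_assoc, ENNReal.inv_mul_cancel heq0 heqtop, one_mul]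
          _ ≤ (e q)⁻¹ * f x := mul_le_mul_right hle _
    have hfleB : ∀ x ∈ B p t, f x ≤ e p * g x := by
      intro x hx
      exact (ENNReal.div_le_iff (hgpos x hx) (hgfin x (Or.inr hx))).mp (le_of_lt hx.1.1)
    -- integrate
    have hνA_le : ν (A q t) ≤ (e q)⁻¹ * μ (A q t) := by
      rw [meas_eq_int' μ ν _ (hAm q t), meas_eq_int μ ν _ (hAm q t),
        ← lintegral_const_mul _ hfm]
      exact setLIntegral_mono (measurable_const.mul hfm) hgleA
    have hμB_le : μ (B p t) ≤ e p * ν (B p t) := by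
      rw [meas_eq_int μ ν _ (hBm p t), meas_eq_int' μ ν _ (hBm p t),
        ← lintegral_const_mul _ hgm]
      exact setLIntegral_mono (measurable_const.mul hgm) hfleB
    -- contradiction
    have hfin : μ (A q t) * ν (B p t) ≠ ⊤ :=
      ENNReal.mul_ne_top (measure_ne_top μ _) (measure_ne_top ν _)
    have hpos : 0 < μ (A q t) * ν (B p t) := ENNReal.mul_pos hμA.ne' hνB.ne'
    have hchain : μ (A q t) * ν (B p t) ≤ ((e q)⁻¹ * e p) * (μ (A q t) * ν (B p t)) := by
      calc μ (A q t) * ν (B p t) ≤ ν (A q t) * μ (B p t) := hcross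
        _ ≤ ((e q)⁻¹ * μ (A q t)) * (e p * ν (B p t)) :=
            mul_le_mul' hνA_le hμB_le
        _ = ((e q)⁻¹ * e p) * (μ (A q t) * ν (B p t)) := by ring
    have hlt : (e q)⁻¹ * e p < 1 := by
      rw [← ENNReal.div_eq_inv_mul]
      rw [ENNReal.div_lt_iff (Or.inl heq0) (Or.inl heqtop), one_mul]
      exact hepq
    have : ((e q)⁻¹ * e p) * (μ (A q t) * ν (B p t)) < μ (A q t) * ν (B p t) := by
      conv_rhs => rw [← one_mul (μ (A q t) * ν (B p t))]
      exact ENNReal.mul_lt_mul_left hpos.ne' hfin hlt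
    exact absurd (lt_of_le_of_lt hchain this) (lt_irrefl _)
  -- build the exceptional set
  set D : ℚ → ℚ → ℚ → Set ℝ := fun p q t =>
    if 0 < p ∧ p < q then (if (μ + ν) (A q t) = 0 then A q t else B p t) else ∅ with hD
  have hDnull : ∀ p q t, (μ + ν) (D p q t) = 0 := by
    intro p q t
    show (μ + ν) (if 0 < p ∧ p < q then (if (μ + ν) (A q t) = 0 then A q t else B p t) else ∅) = 0
    split_ifs with h1 h2
    · exact h2
    · exact (key p q t h1.1 h1.2).resolve_left h2
    · exact measure_empty
  refine ⟨N0 ∪ ⋃ p, ⋃ q, ⋃ t, D p q t, ?_, ?_⟩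
  · apply measure_union_null hN0null
    exact measure_iUnion_null fun p => measure_iUnion_null fun q =>
      measure_iUnion_null fun t => hDnull p q t
  · intro x hx y hy hxy
    by_contra hlt
    push_neg at hlt
    have hxN0 : x ∉ N0 := fun hc => hx (Or.inl hc)
    have hyN0 : y ∉ N0 := fun hc => hy (Or.inl hc)
    -- rationals between h y and h x
    obtain ⟨p, hp0, hyp', hpx⟩ := ENNReal.lt_iff_exists_rat_btwn.mp hlt
    obtain ⟨q, hq0, hpq, hqx'⟩ := ENNReal.lt_iff_exists_rat_btwn.mp hpx
    have hyp : f y / g y < e p := hyp'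
    have hqx : e q < f x / g x := hqx'
    have hppos : 0 < p := by
      have hpos : (0:ℝ≥0∞) < e p := lt_of_le_of_lt zero_le hyp
      have h0 : (0:ℝ) < (p:ℝ) := ENNReal.ofReal_pos.mp hpos
      exact_mod_cast h0
    have hpltq : p < q := by
      have h0 : (p:ℝ) < (q:ℝ) := (ENNReal.ofReal_lt_ofReal_iff'.mp hpq).1
      exact_mod_cast h0
    have hxy' : x < y := by
      rcases lt_or_eq_of_le hxy with h | h
      · exact h
      · exfalso; rw [h] at hpx; exact absurd (lt_trans hyp' hpx) (lt_irrefl _)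
    obtain ⟨t, hxt, hty⟩ := exists_rat_btwn hxy'
    have hxA : x ∈ A q t := ⟨⟨hqx, le_of_lt hxt⟩, hxN0⟩
    have hyB : y ∈ B p t := ⟨⟨hyp, hty⟩, hyN0⟩
    by_cases hA0 : (μ + ν) (A q t) = 0
    · have hxD : x ∈ D p q t := by
        show x ∈ (if 0 < p ∧ p < q then (if (μ + ν) (A q t) = 0 then A q t else B p t) else ∅)
        rw [if_pos ⟨hppos, hpltq⟩, if_pos hA0]
        exact hxA
      exact hx (Or.inr (mem_iUnion.mpr ⟨p, mem_iUnion.mpr ⟨q, mem_iUnion.mpr ⟨t, hxD⟩⟩⟩))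
    · have hyD : y ∈ D p q t := by
        show y ∈ (if 0 < p ∧ p < q then (if (μ + ν) (A q t) = 0 then A q t else B p t) else ∅)
        rw [if_pos ⟨hppos, hpltq⟩, if_neg hA0]
        exact hyB
      exact hy (Or.inr (mem_iUnion.mpr ⟨p, mem_iUnion.mpr ⟨q, mem_iUnion.mpr ⟨t, hyD⟩⟩⟩))

/-- **Lemma A.3, MLRP ⟺ UCSD.**  For real-valued random variables `X` and `Y`,
`law(X) ≽_lr law(Y)` holds if and only if for every Borel set `E` with
`Pr(X ∈ E) > 0` and `Pr(Y ∈ E) > 0`, the conditional distribution of `X` given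
`X ∈ E` first-order stochastically dominates that of `Y` given `Y ∈ E`. -/
theorem mlrp_iff_uniformConditionalStochasticDominance
    {Ω : Type*} [MeasurableSpace Ω] (P : Measure Ω) [IsProbabilityMeasure P]
    (X Y : Ω → ℝ) (hX : Measurable X) (hY : Measurable Y) :
    MLRP (P.map X) (P.map Y) ↔
      ∀ E : Set ℝ, MeasurableSet E → 0 < P.map X E → 0 < P.map Y E →
        ∀ t : ℝ, ((P.map X)[|E]) (Iic t) ≤ ((P.map Y)[|E]) (Iic t) := by
  have hμ : IsProbabilityMeasure (P.map X) := Measure.isProbabilityMeasure_map hX.aemeasurable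
  have hν : IsProbabilityMeasure (P.map Y) := Measure.isProbabilityMeasure_map hY.aemeasurable
  constructor
  · rintro ⟨S, hS, hmono⟩ E hE hμE hνE t
    exact cond_of_cross _ _ E hE t hμE hνE (cross_of_mono _ _ S hS hmono E hE t)
  · intro H
    exact mlrp_of_ucsd _ _ H
end

section
/- Let X and Y be real-valued random variables. Then law(X) ≽_lr law(Y) (the monotone likelihood ratio property with law(X) dominating) holds if and only if for every measurable weight function h with h(X) > 0 a.s., h(Y) > 0 a.s., 0 < E[h(X)] < ∞, and 0 < E[h(Y)] < ∞, the tilted distribution h⊙X first-order stochastically dominates the tilted distribution h⊙Y, i.e., E[1(X ≤ t)·h(X)]/E[h(X)] ≤ E[1(Y ≤ t)·h(Y)]/E[h(Y)] for all t ∈ ℝ. -/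
open MeasureTheory Set
open scoped ENNReal

lemma aux_ratio_iff {a b : ℝ≥0∞} (ha : a ≤ 1) (hb : b ≤ 1) :
    a / (1 - a) ≤ b / (1 - b) ↔ a ≤ b := by
  rcases eq_or_lt_of_le hb with hb1 | hb1
  · rcases eq_or_ne b 0 with hb0 | hb0
    · subst hb0; exact absurd hb1.symm one_ne_zero
    · rw [← hb1, tsub_self, ENNReal.div_zero hb0]
      simp [le_top, ha, hb1 ▸ ha]
  · rcases eq_or_lt_of_le ha with ha1 | ha1
    · rw [ha1, tsub_self, ENNReal.div_zero one_ne_zero]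
      constructor
      · intro h
        exact absurd (top_le_iff.1 h) (ENNReal.div_lt_top (hb1.trans_le le_top).ne
          (by simpa [tsub_eq_zero_iff_le] using hb1.not_ge)).ne
      · intro h; exact absurd (le_antisymm hb h) hb1.ne
    · -- both < 1 : go to reals
      have ha' : a ≠ ⊤ := (ha1.trans_le le_top).ne
      have hb' : b ≠ ⊤ := (hb1.trans_le le_top).ne
      set x := a.toReal with hx
      set y := b.toReal with hy
      have hax : a = ENNReal.ofReal x := (ENNReal.ofReal_toReal ha').symm
      have hby : b = ENNReal.ofReal y := (ENNReal.ofReal_toReal hb').symm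
      have hx1 : x < 1 := by
        rw [hx]; exact (ENNReal.toReal_lt_toReal ha' ENNReal.one_ne_top).2 (by simpa using ha1)
      have hy1 : y < 1 := by
        rw [hy]; exact (ENNReal.toReal_lt_toReal hb' ENNReal.one_ne_top).2 (by simpa using hb1)
      have hx0 : 0 ≤ x := ENNReal.toReal_nonneg
      have hy0 : 0 ≤ y := ENNReal.toReal_nonneg
      have h1a : (1 : ℝ≥0∞) - a = ENNReal.ofReal (1 - x) := by
        rw [hax, ← ENNReal.ofReal_one, ← ENNReal.ofReal_sub _ hx0]
      have h1b : (1 : ℝ≥0∞) - b = ENNReal.ofReal (1 - y) := by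
        rw [hby, ← ENNReal.ofReal_one, ← ENNReal.ofReal_sub _ hy0]
      rw [h1a, h1b, hax, hby, ← ENNReal.ofReal_div_of_pos (by linarith),
        ← ENNReal.ofReal_div_of_pos (by linarith),
        ENNReal.ofReal_le_ofReal_iff (div_nonneg hy0 (by linarith)), ENNReal.ofReal_le_ofReal_iff hy0,
        div_le_div_iff₀ (by linarith) (by linarith)]
      constructor
      · intro h; nlinarith
      · intro h; nlinarith


lemma aux_ae_prod {lam : Measure ℝ} [SFinite lam] {S : Set ℝ} (hS : lam S = 0) :
    ∀ᵐ z ∂(lam.prod lam), z.1 ∉ S ∧ z.2 ∉ S := by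
  have hT : lam (toMeasurable lam S) = 0 := by rw [measure_toMeasurable]; exact hS
  have h0 : (lam.prod lam) ((toMeasurable lam S) ×ˢ univ ∪ univ ×ˢ (toMeasurable lam S)) = 0 := by
    apply measure_union_null <;> rw [Measure.prod_prod] <;> simp [hT]
  rw [ae_iff]
  refine measure_mono_null ?_ h0
  intro z hz
  simp only [not_and_or, not_not] at hz
  rcases hz with hz | hz
  · exact Or.inl ⟨subset_toMeasurable _ _ hz, mem_univ _⟩
  · exact Or.inr ⟨mem_univ _, subset_toMeasurable _ _ hz⟩

lemma aux_core {lam : Measure ℝ} [IsFiniteMeasure lam] {f g H : ℝ → ℝ≥0∞}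
    (hf : Measurable f) (hg : Measurable g) (hH : Measurable H)
    {S : Set ℝ} (hS : lam S = 0)
    (hmono : ∀ x ∉ S, ∀ y ∉ S, x ≤ y → f x * g y ≤ g x * f y) (t : ℝ) :
    (∫⁻ x in Iic t, f x * H x ∂lam) * (∫⁻ y in Ioi t, g y * H y ∂lam) ≤
      (∫⁻ x in Iic t, g x * H x ∂lam) * (∫⁻ y in Ioi t, f y * H y ∂lam) := by
  rw [← lintegral_indicator measurableSet_Iic, ← lintegral_indicator measurableSet_Ioi,
    ← lintegral_indicator measurableSet_Iic, ← lintegral_indicator measurableSet_Ioi,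
    ← lintegral_prod_mul (((show Measurable (fun x => f x * H x) from hf.mul hH).indicator measurableSet_Iic).aemeasurable)
      (((show Measurable (fun x => g x * H x) from hg.mul hH).indicator measurableSet_Ioi).aemeasurable),
    ← lintegral_prod_mul (((show Measurable (fun x => g x * H x) from hg.mul hH).indicator measurableSet_Iic).aemeasurable)
      (((show Measurable (fun x => f x * H x) from hf.mul hH).indicator measurableSet_Ioi).aemeasurable)]
  refine lintegral_mono_ae ?_
  filter_upwards [aux_ae_prod hS] with z hz
  by_cases hx : z.1 ∈ Iic t
  · by_cases hy : z.2 ∈ Ioi t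
    · rw [indicator_of_mem hx, indicator_of_mem hy, indicator_of_mem hx, indicator_of_mem hy]
      have hle : f z.1 * g z.2 ≤ g z.1 * f z.2 :=
        hmono z.1 hz.1 z.2 hz.2 (le_trans hx (le_of_lt hy))
      calc f z.1 * H z.1 * (g z.2 * H z.2) = f z.1 * g z.2 * (H z.1 * H z.2) := by ring
        _ ≤ g z.1 * f z.2 * (H z.1 * H z.2) := mul_le_mul_left hle _
        _ = g z.1 * H z.1 * (f z.2 * H z.2) := by ring
    · simp [indicator_of_notMem hy]
  · simp [indicator_of_notMem hx]


lemma aux_tilt (μ lam : Measure ℝ) [IsFiniteMeasure μ] [IsFiniteMeasure lam] (hac : μ ≪ lam)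
    {k : ℝ → ℝ} (hk : Measurable k) (hint : Integrable k μ) (hpos : 0 ≤ᵐ[μ] k) :
    ENNReal.ofReal (∫ x, k x ∂μ) = ∫⁻ x, μ.rnDeriv lam x * ENNReal.ofReal (k x) ∂lam := by
  rw [ofReal_integral_eq_lintegral_ofReal hint hpos]
  conv_lhs => rw [← Measure.withDensity_rnDeriv_eq _ _ hac]
  rw [lintegral_withDensity_eq_lintegral_mul lam (Measure.measurable_rnDeriv _ _)
    hk.ennreal_ofReal]
  rfl

section
variable {μ ν : Measure ℝ} [IsProbabilityMeasure μ] [IsProbabilityMeasure ν]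

lemma aux_fg : ∀ᵐ x ∂(μ + ν),
    μ.rnDeriv (μ + ν) x ≤ 1 ∧ ν.rnDeriv (μ + ν) x = 1 - μ.rnDeriv (μ + ν) x := by
  filter_upwards [Measure.rnDeriv_add μ ν (μ + ν), Measure.rnDeriv_self (μ + ν)] with x h1 h2
  have hsum : μ.rnDeriv (μ + ν) x + ν.rnDeriv (μ + ν) x = 1 := by
    rw [← Pi.add_apply, ← h1, h2]
  have hle : μ.rnDeriv (μ + ν) x ≤ 1 := hsum ▸ le_self_add
  refine ⟨hle, ENNReal.eq_sub_of_add_eq (hle.trans_lt ENNReal.one_lt_top).ne ?_⟩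
  rw [add_comm]; exact hsum
end

lemma aux_forward {μ ν : Measure ℝ} [IsProbabilityMeasure μ] [IsProbabilityMeasure ν]
    (hS : ∃ S : Set ℝ, (μ + ν) S = 0 ∧ ∀ x, x ∉ S → ∀ y, y ∉ S → x ≤ y →
      μ.rnDeriv (μ + ν) x / ν.rnDeriv (μ + ν) x ≤ μ.rnDeriv (μ + ν) y / ν.rnDeriv (μ + ν) y)
    {h : ℝ → ℝ} (hmeas : Measurable h) (hposμ : ∀ᵐ x ∂μ, 0 ≤ h x) (hposν : ∀ᵐ x ∂ν, 0 ≤ h x)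
    (hintμ : Integrable h μ) (hintν : Integrable h ν) (t : ℝ) :
    (∫ x, (Iic t).indicator h x ∂μ) * (∫ x, h x ∂ν) ≤
      (∫ x, (Iic t).indicator h x ∂ν) * (∫ x, h x ∂μ) := by
  obtain ⟨S, hS0, hmono⟩ := hS
  have hmf : Measurable (μ.rnDeriv (μ + ν)) := Measure.measurable_rnDeriv _ _
  have hmg : Measurable (ν.rnDeriv (μ + ν)) := Measure.measurable_rnDeriv _ _
  have hacμ : μ ≪ μ + ν := Measure.absolutelyContinuous_of_le (Measure.le_add_right le_rfl)
  have hacν : ν ≪ μ + ν := Measure.absolutelyContinuous_of_le (Measure.le_add_left le_rfl)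
  -- enlarged null set
  set S' : Set ℝ := S ∪ {x | ¬(μ.rnDeriv (μ + ν) x ≤ 1 ∧
      ν.rnDeriv (μ + ν) x = 1 - μ.rnDeriv (μ + ν) x)} with hS'def
  have hS'0 : (μ + ν) S' = 0 := measure_union_null hS0 (ae_iff.1 aux_fg)
  have hmono' : ∀ x ∉ S', ∀ y ∉ S', x ≤ y →
      μ.rnDeriv (μ + ν) x * ν.rnDeriv (μ + ν) y ≤ ν.rnDeriv (μ + ν) x * μ.rnDeriv (μ + ν) y := by
    intro x hx y hy hxy
    have hxS : x ∉ S := fun hc => hx (Or.inl hc)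
    have hyS : y ∉ S := fun hc => hy (Or.inl hc)
    have hxE : μ.rnDeriv (μ + ν) x ≤ 1 ∧ ν.rnDeriv (μ + ν) x = 1 - μ.rnDeriv (μ + ν) x := by
      by_contra hc; exact hx (Or.inr hc)
    have hyE : μ.rnDeriv (μ + ν) y ≤ 1 ∧ ν.rnDeriv (μ + ν) y = 1 - μ.rnDeriv (μ + ν) y := by
      by_contra hc; exact hy (Or.inr hc)
    have hr := hmono x hxS y hyS hxy
    rw [hxE.2, hyE.2] at hr ⊢
    have hle : μ.rnDeriv (μ + ν) x ≤ μ.rnDeriv (μ + ν) y :=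
      (aux_ratio_iff hxE.1 hyE.1).1 hr
    calc μ.rnDeriv (μ + ν) x * (1 - μ.rnDeriv (μ + ν) y)
        ≤ μ.rnDeriv (μ + ν) y * (1 - μ.rnDeriv (μ + ν) x) :=
          mul_le_mul' hle (tsub_le_tsub_left hle 1)
      _ = (1 - μ.rnDeriv (μ + ν) x) * μ.rnDeriv (μ + ν) y := mul_comm _ _
  -- integral conversions
  have hindint_μ : Integrable ((Iic t).indicator h) μ := hintμ.indicator measurableSet_Iic
  have hindint_ν : Integrable ((Iic t).indicator h) ν := hintν.indicator measurableSet_Iic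
  have hindpos_μ : 0 ≤ᵐ[μ] (Iic t).indicator h :=
    hposμ.mono fun x hx => indicator_apply_nonneg fun _ => hx
  have hindpos_ν : 0 ≤ᵐ[ν] (Iic t).indicator h :=
    hposν.mono fun x hx => indicator_apply_nonneg fun _ => hx
  have hindicator_eq : ∀ F : ℝ → ℝ≥0∞,
      (fun x => F x * ENNReal.ofReal ((Iic t).indicator h x)) =
      fun x => (Iic t).indicator (fun x => F x * ENNReal.ofReal (h x)) x := by
    intro F; ext x; by_cases hx : x ∈ Iic t <;> simp [hx]
  have c1 : ENNReal.ofReal (∫ x, (Iic t).indicator h x ∂μ) =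
      ∫⁻ x in Iic t, μ.rnDeriv (μ + ν) x * ENNReal.ofReal (h x) ∂(μ + ν) := by
    rw [aux_tilt μ (μ + ν) hacμ (hmeas.indicator measurableSet_Iic) hindint_μ hindpos_μ,
      hindicator_eq, lintegral_indicator measurableSet_Iic]
  have c2 : ENNReal.ofReal (∫ x, (Iic t).indicator h x ∂ν) =
      ∫⁻ x in Iic t, ν.rnDeriv (μ + ν) x * ENNReal.ofReal (h x) ∂(μ + ν) := by
    rw [aux_tilt ν (μ + ν) hacν (hmeas.indicator measurableSet_Iic) hindint_ν hindpos_ν,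
      hindicator_eq, lintegral_indicator measurableSet_Iic]
  have c3 : ENNReal.ofReal (∫ x, h x ∂μ) =
      (∫⁻ x in Iic t, μ.rnDeriv (μ + ν) x * ENNReal.ofReal (h x) ∂(μ + ν)) +
      (∫⁻ x in Ioi t, μ.rnDeriv (μ + ν) x * ENNReal.ofReal (h x) ∂(μ + ν)) := by
    rw [aux_tilt μ (μ + ν) hacμ hmeas hintμ hposμ,
      ← lintegral_add_compl (fun x => μ.rnDeriv (μ + ν) x * ENNReal.ofReal (h x))
        (measurableSet_Iic (a := t)), compl_Iic]
  have c4 : ENNReal.ofReal (∫ x, h x ∂ν) =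
      (∫⁻ x in Iic t, ν.rnDeriv (μ + ν) x * ENNReal.ofReal (h x) ∂(μ + ν)) +
      (∫⁻ x in Ioi t, ν.rnDeriv (μ + ν) x * ENNReal.ofReal (h x) ∂(μ + ν)) := by
    rw [aux_tilt ν (μ + ν) hacν hmeas hintν hposν,
      ← lintegral_add_compl (fun x => ν.rnDeriv (μ + ν) x * ENNReal.ofReal (h x))
        (measurableSet_Iic (a := t)), compl_Iic]
  have core := aux_core hmf hmg hmeas.ennreal_ofReal hS'0 hmono' t
  -- move to ℝ≥0∞
  rw [← ENNReal.ofReal_le_ofReal_iff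
    (mul_nonneg (integral_nonneg_of_ae hindpos_ν) (integral_nonneg_of_ae hposμ)),
    ENNReal.ofReal_mul (integral_nonneg_of_ae hindpos_μ),
    ENNReal.ofReal_mul (integral_nonneg_of_ae hindpos_ν), c1, c2, c3, c4]
  calc (∫⁻ x in Iic t, μ.rnDeriv (μ + ν) x * ENNReal.ofReal (h x) ∂(μ + ν)) *
        ((∫⁻ x in Iic t, ν.rnDeriv (μ + ν) x * ENNReal.ofReal (h x) ∂(μ + ν)) +
         (∫⁻ x in Ioi t, ν.rnDeriv (μ + ν) x * ENNReal.ofReal (h x) ∂(μ + ν)))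
      = (∫⁻ x in Iic t, ν.rnDeriv (μ + ν) x * ENNReal.ofReal (h x) ∂(μ + ν)) *
        (∫⁻ x in Iic t, μ.rnDeriv (μ + ν) x * ENNReal.ofReal (h x) ∂(μ + ν)) +
        (∫⁻ x in Iic t, μ.rnDeriv (μ + ν) x * ENNReal.ofReal (h x) ∂(μ + ν)) *
        (∫⁻ x in Ioi t, ν.rnDeriv (μ + ν) x * ENNReal.ofReal (h x) ∂(μ + ν)) := by ring
    _ ≤ (∫⁻ x in Iic t, ν.rnDeriv (μ + ν) x * ENNReal.ofReal (h x) ∂(μ + ν)) *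
        (∫⁻ x in Iic t, μ.rnDeriv (μ + ν) x * ENNReal.ofReal (h x) ∂(μ + ν)) +
        (∫⁻ x in Iic t, ν.rnDeriv (μ + ν) x * ENNReal.ofReal (h x) ∂(μ + ν)) *
        (∫⁻ x in Ioi t, μ.rnDeriv (μ + ν) x * ENNReal.ofReal (h x) ∂(μ + ν)) :=
          add_le_add_right core _
    _ = (∫⁻ x in Iic t, ν.rnDeriv (μ + ν) x * ENNReal.ofReal (h x) ∂(μ + ν)) *
        ((∫⁻ x in Iic t, μ.rnDeriv (μ + ν) x * ENNReal.ofReal (h x) ∂(μ + ν)) +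
         (∫⁻ x in Ioi t, μ.rnDeriv (μ + ν) x * ENNReal.ofReal (h x) ∂(μ + ν))) := by ring

-- Step 1 : the claim
lemma aux_claim {μ ν : Measure ℝ} [IsProbabilityMeasure μ] [IsProbabilityMeasure ν]
    (hksd : ∀ h : ℝ → ℝ, Measurable h → (∃ ε > (0:ℝ), ∀ x, ε ≤ h x) → (∃ C, ∀ x, h x ≤ C) →
      ∀ t : ℝ,
      (∫ x, (Iic t).indicator h x ∂μ) * (∫ x, h x ∂ν) ≤
        (∫ x, (Iic t).indicator h x ∂ν) * (∫ x, h x ∂μ))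
    (c c' s : ℚ) (hc : 0 < (c:ℝ)) (hcc' : (c:ℝ) < (c':ℝ)) (hc'1 : (c':ℝ) < 1) :
    (μ + ν) (Iic (s:ℝ) ∩ {x | ENNReal.ofReal (c':ℝ) < μ.rnDeriv (μ + ν) x}) = 0 ∨
    (μ + ν) (Ioi (s:ℝ) ∩ {x | μ.rnDeriv (μ + ν) x < ENNReal.ofReal (c:ℝ)}) = 0 := by
  by_contra hcon
  push_neg at hcon
  set A : Set ℝ := Iic (s:ℝ) ∩ {x | ENNReal.ofReal (c':ℝ) < μ.rnDeriv (μ + ν) x} with hAdef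
  set B : Set ℝ := Ioi (s:ℝ) ∩ {x | μ.rnDeriv (μ + ν) x < ENNReal.ofReal (c:ℝ)} with hBdef
  have hmf : Measurable (μ.rnDeriv (μ + ν)) := Measure.measurable_rnDeriv _ _
  have hmg : Measurable (ν.rnDeriv (μ + ν)) := Measure.measurable_rnDeriv _ _
  have hacμ : μ ≪ μ + ν := Measure.absolutelyContinuous_of_le (Measure.le_add_right le_rfl)
  have hacν : ν ≪ μ + ν := Measure.absolutelyContinuous_of_le (Measure.le_add_left le_rfl)
  have hA : MeasurableSet A := measurableSet_Iic.inter (hmf measurableSet_Ioi)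
  have hB : MeasurableSet B := measurableSet_Ioi.inter (hmf measurableSet_Iio)
  set a : ℝ := ((μ + ν) A).toReal with hadef
  set b : ℝ := ((μ + ν) B).toReal with hbdef
  have hmA : (μ + ν) A = ENNReal.ofReal a := (ENNReal.ofReal_toReal (measure_ne_top _ _)).symm
  have hmB : (μ + ν) B = ENNReal.ofReal b := (ENNReal.ofReal_toReal (measure_ne_top _ _)).symm
  have ha : 0 < a := ENNReal.toReal_pos hcon.1 (measure_ne_top _ _)
  have hb : 0 < b := ENNReal.toReal_pos hcon.2 (measure_ne_top _ _)
  -- choose ε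
  have hlt : (1-(c':ℝ))*a*((c:ℝ)*b) < (c':ℝ)*a*((1-(c:ℝ))*b) := by
    nlinarith [mul_pos (mul_pos ha hb) (sub_pos.2 hcc')]
  have htend : Filter.Tendsto (fun ε : ℝ => ((1-(c':ℝ))*a + ε*2)*((c:ℝ)*b + ε*2))
      (nhdsWithin 0 (Ioi 0)) (nhds ((1-(c':ℝ))*a*((c:ℝ)*b))) := by
    have hco : Continuous fun ε : ℝ => ((1-(c':ℝ))*a + ε*2)*((c:ℝ)*b + ε*2) := by fun_prop
    simpa using (hco.tendsto 0).mono_left nhdsWithin_le_nhds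
  obtain ⟨ε, hεlt, hεpos⟩ :=
    ((htend.eventually_lt_const hlt).and self_mem_nhdsWithin).exists
  -- the weight function
  set h : ℝ → ℝ := fun x => (A ∪ B).indicator 1 x + ε with hhdef
  have hmeash : Measurable h := (measurable_one.indicator (hA.union hB)).add measurable_const
  have hpos : ∀ x, 0 ≤ h x := fun x =>
    add_nonneg (indicator_apply_nonneg fun _ => zero_le_one) hεpos.le
  have hub : ∀ x, h x ≤ 1 + ε := fun x => by
    show (A ∪ B).indicator 1 x + ε ≤ 1 + ε
    refine add_le_add_left ?_ ε
    by_cases hx : x ∈ A ∪ B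
    · rw [indicator_of_mem hx]; exact le_refl _
    · rw [indicator_of_notMem hx]; exact zero_le_one
  have hintμ : Integrable h μ := by
    refine (integrable_const (1+ε)).mono' hmeash.aestronglyMeasurable (ae_of_all _ fun x => ?_)
    rw [Real.norm_eq_abs, abs_of_nonneg (hpos x)]; exact hub x
  have hintν : Integrable h ν := by
    refine (integrable_const (1+ε)).mono' hmeash.aestronglyMeasurable (ae_of_all _ fun x => ?_)
    rw [Real.norm_eq_abs, abs_of_nonneg (hpos x)]; exact hub x
  have ineq := hksd h hmeash ⟨ε, hεpos, fun x =>
      le_add_of_nonneg_left (indicator_apply_nonneg fun _ => zero_le_one)⟩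
    ⟨1 + ε, hub⟩ (s:ℝ)
  -- convert to lintegrals
  set H : ℝ → ℝ≥0∞ := fun x => ENNReal.ofReal (h x) with hHdef
  have hmeasH : Measurable H := hmeash.ennreal_ofReal
  set A1 : ℝ≥0∞ := ∫⁻ x in Iic (s:ℝ), μ.rnDeriv (μ + ν) x * H x ∂(μ + ν) with hA1def
  set A2 : ℝ≥0∞ := ∫⁻ x in Ioi (s:ℝ), μ.rnDeriv (μ + ν) x * H x ∂(μ + ν) with hA2def
  set B1 : ℝ≥0∞ := ∫⁻ x in Iic (s:ℝ), ν.rnDeriv (μ + ν) x * H x ∂(μ + ν) with hB1def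
  set B2 : ℝ≥0∞ := ∫⁻ x in Ioi (s:ℝ), ν.rnDeriv (μ + ν) x * H x ∂(μ + ν) with hB2def
  have hindicator_eq : ∀ F : ℝ → ℝ≥0∞,
      (fun x => F x * ENNReal.ofReal ((Iic (s:ℝ)).indicator h x)) =
      fun x => (Iic (s:ℝ)).indicator (fun x => F x * H x) x := by
    intro F; ext x; by_cases hx : x ∈ Iic (s:ℝ) <;> simp [hx, hHdef]
  have hindint_μ : Integrable ((Iic (s:ℝ)).indicator h) μ := hintμ.indicator measurableSet_Iic
  have hindint_ν : Integrable ((Iic (s:ℝ)).indicator h) ν := hintν.indicator measurableSet_Iic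
  have c1 : ENNReal.ofReal (∫ x, (Iic (s:ℝ)).indicator h x ∂μ) = A1 := by
    rw [aux_tilt μ (μ + ν) hacμ (hmeash.indicator measurableSet_Iic) hindint_μ
      (ae_of_all _ fun x => indicator_apply_nonneg fun _ => hpos x),
      hindicator_eq, lintegral_indicator measurableSet_Iic]
  have c2 : ENNReal.ofReal (∫ x, (Iic (s:ℝ)).indicator h x ∂ν) = B1 := by
    rw [aux_tilt ν (μ + ν) hacν (hmeash.indicator measurableSet_Iic) hindint_ν
      (ae_of_all _ fun x => indicator_apply_nonneg fun _ => hpos x),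
      hindicator_eq, lintegral_indicator measurableSet_Iic]
  have c3 : ENNReal.ofReal (∫ x, h x ∂μ) = A1 + A2 := by
    rw [aux_tilt μ (μ + ν) hacμ hmeash hintμ (ae_of_all _ hpos)]
    have heq := lintegral_add_compl (μ := μ + ν)
      (fun x => μ.rnDeriv (μ + ν) x * H x) (measurableSet_Iic (a := (s:ℝ)))
    rw [compl_Iic] at heq
    exact heq.symm
  have c4 : ENNReal.ofReal (∫ x, h x ∂ν) = B1 + B2 := by
    rw [aux_tilt ν (μ + ν) hacν hmeash hintν (ae_of_all _ hpos)]
    have heq := lintegral_add_compl (μ := μ + ν)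
      (fun x => ν.rnDeriv (μ + ν) x * H x) (measurableSet_Iic (a := (s:ℝ)))
    rw [compl_Iic] at heq
    exact heq.symm
  have hineq' : A1 * (B1 + B2) ≤ B1 * (A1 + A2) := by
    have hmono := ENNReal.ofReal_le_ofReal ineq
    rw [ENNReal.ofReal_mul (integral_nonneg_of_ae
        (ae_of_all _ fun x => indicator_apply_nonneg fun _ => hpos x)),
      ENNReal.ofReal_mul (integral_nonneg_of_ae
        (ae_of_all _ fun x => indicator_apply_nonneg fun _ => hpos x)),
      c1, c2, c3, c4] at hmono
    exact hmono
  -- cancel common term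
  have hA1top : A1 ≠ ⊤ := by
    intro hcontra
    have : ENNReal.ofReal (∫ x, h x ∂μ) = ⊤ := by rw [c3, hcontra, top_add]
    exact ENNReal.ofReal_ne_top this
  have hB1top : B1 ≠ ⊤ := by
    intro hcontra
    have : ENNReal.ofReal (∫ x, h x ∂ν) = ⊤ := by rw [c4, hcontra, top_add]
    exact ENNReal.ofReal_ne_top this
  have hcancel : A1 * B2 ≤ B1 * A2 := by
    have h2 : A1 * B1 + A1 * B2 ≤ A1 * B1 + B1 * A2 := by
      calc A1 * B1 + A1 * B2 = A1 * (B1 + B2) := (mul_add _ _ _).symm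
        _ ≤ B1 * (A1 + A2) := hineq'
        _ = A1 * B1 + B1 * A2 := by ring
    exact (ENNReal.add_le_add_iff_left (ENNReal.mul_ne_top hA1top hB1top)).1 h2
  -- bounds
  have hH1 : ∀ x, x ∈ A ∪ B → (1:ℝ≥0∞) ≤ H x := fun x hx => by
    rw [hHdef]
    simp only [hhdef, indicator_of_mem hx, Pi.one_apply]
    rw [← ENNReal.ofReal_one]
    exact ENNReal.ofReal_le_ofReal (by linarith)
  have lbA1 : ENNReal.ofReal (c':ℝ) * (μ + ν) A ≤ A1 := by
    calc ENNReal.ofReal (c':ℝ) * (μ + ν) A = ∫⁻ _ in A, ENNReal.ofReal (c':ℝ) ∂(μ + ν) :=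
          (setLIntegral_const _ _).symm
      _ ≤ ∫⁻ x in A, μ.rnDeriv (μ + ν) x * H x ∂(μ + ν) := by
          refine setLIntegral_mono_ae ((hmf.mul hmeasH).aemeasurable.restrict)
            (ae_of_all _ fun x hx => ?_)
          have h1 : ENNReal.ofReal (c':ℝ) ≤ μ.rnDeriv (μ + ν) x := (hx.2 : _).le
          calc ENNReal.ofReal (c':ℝ) = ENNReal.ofReal (c':ℝ) * 1 := (mul_one _).symm
            _ ≤ μ.rnDeriv (μ + ν) x * H x := mul_le_mul' h1 (hH1 x (Or.inl hx))
      _ ≤ A1 := lintegral_mono_set inter_subset_left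
  have lbB2 : ENNReal.ofReal (1-(c:ℝ)) * (μ + ν) B ≤ B2 := by
    calc ENNReal.ofReal (1-(c:ℝ)) * (μ + ν) B = ∫⁻ _ in B, ENNReal.ofReal (1-(c:ℝ)) ∂(μ + ν) :=
          (setLIntegral_const _ _).symm
      _ ≤ ∫⁻ x in B, ν.rnDeriv (μ + ν) x * H x ∂(μ + ν) := by
          refine setLIntegral_mono_ae ((hmg.mul hmeasH).aemeasurable.restrict) ?_
          filter_upwards [aux_fg (μ := μ) (ν := ν)] with x hfg hx
          have h1 : ENNReal.ofReal (1-(c:ℝ)) ≤ ν.rnDeriv (μ + ν) x := by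
            rw [hfg.2, ENNReal.ofReal_sub _ hc.le, ENNReal.ofReal_one]
            exact tsub_le_tsub_left (hx.2 : _).le 1
          calc ENNReal.ofReal (1-(c:ℝ)) = ENNReal.ofReal (1-(c:ℝ)) * 1 := (mul_one _).symm
            _ ≤ ν.rnDeriv (μ + ν) x * H x := mul_le_mul' h1 (hH1 x (Or.inr hx))
      _ ≤ B2 := lintegral_mono_set inter_subset_left
  -- upper bounds
  have h2univ : (μ + ν) (univ : Set ℝ) = 2 := by
    simp [Measure.add_apply, measure_univ]
    norm_num
  have hofeps : ∀ x : ℝ, x ∉ A ∪ B → H x = ENNReal.ofReal ε := fun x hx => by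
    show ENNReal.ofReal ((A ∪ B).indicator 1 x + ε) = ENNReal.ofReal ε
    rw [indicator_of_notMem hx, zero_add]
  have hofone : ∀ x : ℝ, x ∈ A ∪ B → H x = 1 + ENNReal.ofReal ε := fun x hx => by
    show ENNReal.ofReal ((A ∪ B).indicator 1 x + ε) = 1 + ENNReal.ofReal ε
    rw [indicator_of_mem hx, Pi.one_apply, ENNReal.ofReal_add zero_le_one hεpos.le,
      ENNReal.ofReal_one]
  have ubB1 : B1 ≤ ENNReal.ofReal (1-(c':ℝ)) * (μ + ν) A + ENNReal.ofReal ε * 2 := by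
    have key : ∀ᵐ x ∂(μ + ν), (Iic (s:ℝ)).indicator (fun x => ν.rnDeriv (μ + ν) x * H x) x ≤
        A.indicator (fun _ => ENNReal.ofReal (1-(c':ℝ))) x +
        (Iic (s:ℝ)).indicator (fun _ => ENNReal.ofReal ε) x := by
      filter_upwards [aux_fg (μ := μ) (ν := ν)] with x hfg
      by_cases hxs : x ∈ Iic (s:ℝ)
      · rw [indicator_of_mem hxs, indicator_of_mem hxs]
        have hgle : ν.rnDeriv (μ + ν) x ≤ 1 := hfg.2 ▸ tsub_le_self
        by_cases hxA : x ∈ A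
        · rw [indicator_of_mem hxA, hofone x (Or.inl hxA), mul_add, mul_one]
          refine add_le_add ?_ ?_
          · rw [hfg.2, ENNReal.ofReal_sub _ (hc.trans hcc').le, ENNReal.ofReal_one]
            exact tsub_le_tsub_left (hxA.2 : _).le 1
          · calc ν.rnDeriv (μ + ν) x * ENNReal.ofReal ε ≤ 1 * ENNReal.ofReal ε :=
                mul_le_mul' hgle le_rfl
              _ = ENNReal.ofReal ε := one_mul _
        · have hxB : x ∉ B := fun hxB => absurd (mem_Ioi.1 hxB.1) (not_lt.2 (mem_Iic.1 hxs))
          rw [indicator_of_notMem hxA, zero_add,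
            hofeps x (fun hc => hc.elim hxA hxB)]
          calc ν.rnDeriv (μ + ν) x * ENNReal.ofReal ε ≤ 1 * ENNReal.ofReal ε :=
              mul_le_mul' hgle le_rfl
            _ = ENNReal.ofReal ε := one_mul _
      · rw [indicator_of_notMem hxs]
        exact zero_le
    calc B1 = ∫⁻ x, (Iic (s:ℝ)).indicator (fun x => ν.rnDeriv (μ + ν) x * H x) x ∂(μ + ν) :=
          (lintegral_indicator measurableSet_Iic _).symm
      _ ≤ ∫⁻ x, (A.indicator (fun _ => ENNReal.ofReal (1-(c':ℝ))) x +
            (Iic (s:ℝ)).indicator (fun _ => ENNReal.ofReal ε) x) ∂(μ + ν) :=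
          lintegral_mono_ae key
      _ = ENNReal.ofReal (1-(c':ℝ)) * (μ + ν) A + ENNReal.ofReal ε * (μ + ν) (Iic (s:ℝ)) := by
          rw [lintegral_add_left (measurable_const.indicator hA),
            lintegral_indicator hA, lintegral_indicator measurableSet_Iic,
            setLIntegral_const, setLIntegral_const]
      _ ≤ ENNReal.ofReal (1-(c':ℝ)) * (μ + ν) A + ENNReal.ofReal ε * 2 := by
          refine add_le_add_right (mul_le_mul_right ?_ _) _
          calc (μ + ν) (Iic (s:ℝ)) ≤ (μ + ν) univ := measure_mono (subset_univ _)
            _ = 2 := h2univ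
  have ubA2 : A2 ≤ ENNReal.ofReal (c:ℝ) * (μ + ν) B + ENNReal.ofReal ε * 2 := by
    have key : ∀ᵐ x ∂(μ + ν), (Ioi (s:ℝ)).indicator (fun x => μ.rnDeriv (μ + ν) x * H x) x ≤
        B.indicator (fun _ => ENNReal.ofReal (c:ℝ)) x +
        (Ioi (s:ℝ)).indicator (fun _ => ENNReal.ofReal ε) x := by
      filter_upwards [aux_fg (μ := μ) (ν := ν)] with x hfg
      by_cases hxs : x ∈ Ioi (s:ℝ)
      · rw [indicator_of_mem hxs, indicator_of_mem hxs]
        by_cases hxB : x ∈ B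
        · rw [indicator_of_mem hxB, hofone x (Or.inr hxB), mul_add, mul_one]
          refine add_le_add (hxB.2 : _).le ?_
          calc μ.rnDeriv (μ + ν) x * ENNReal.ofReal ε ≤ 1 * ENNReal.ofReal ε :=
              mul_le_mul' hfg.1 le_rfl
            _ = ENNReal.ofReal ε := one_mul _
        · have hxA : x ∉ A := fun hxA => absurd (mem_Iic.1 hxA.1) (not_le.2 (mem_Ioi.1 hxs))
          rw [indicator_of_notMem hxB, zero_add,
            hofeps x (fun hc => hc.elim hxA hxB)]
          calc μ.rnDeriv (μ + ν) x * ENNReal.ofReal ε ≤ 1 * ENNReal.ofReal ε :=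
              mul_le_mul' hfg.1 le_rfl
            _ = ENNReal.ofReal ε := one_mul _
      · rw [indicator_of_notMem hxs]
        exact zero_le
    calc A2 = ∫⁻ x, (Ioi (s:ℝ)).indicator (fun x => μ.rnDeriv (μ + ν) x * H x) x ∂(μ + ν) :=
          (lintegral_indicator measurableSet_Ioi _).symm
      _ ≤ ∫⁻ x, (B.indicator (fun _ => ENNReal.ofReal (c:ℝ)) x +
            (Ioi (s:ℝ)).indicator (fun _ => ENNReal.ofReal ε) x) ∂(μ + ν) :=
          lintegral_mono_ae key
      _ = ENNReal.ofReal (c:ℝ) * (μ + ν) B + ENNReal.ofReal ε * (μ + ν) (Ioi (s:ℝ)) := by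
          rw [lintegral_add_left (measurable_const.indicator hB),
            lintegral_indicator hB, lintegral_indicator measurableSet_Ioi,
            setLIntegral_const, setLIntegral_const]
      _ ≤ ENNReal.ofReal (c:ℝ) * (μ + ν) B + ENNReal.ofReal ε * 2 := by
          refine add_le_add_right (mul_le_mul_right ?_ _) _
          calc (μ + ν) (Ioi (s:ℝ)) ≤ (μ + ν) univ := measure_mono (subset_univ _)
            _ = 2 := h2univ
  -- final contradiction
  have hc'0 : (0:ℝ) ≤ (c':ℝ) := (hc.trans hcc').le
  have h1c : (0:ℝ) ≤ 1 - (c:ℝ) := by linarith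
  have h1c' : (0:ℝ) ≤ 1 - (c':ℝ) := by linarith
  have e1 : ENNReal.ofReal ((c':ℝ) * a * ((1-(c:ℝ)) * b)) =
      ENNReal.ofReal (c':ℝ) * ENNReal.ofReal a *
        (ENNReal.ofReal (1-(c:ℝ)) * ENNReal.ofReal b) := by
    rw [ENNReal.ofReal_mul (mul_nonneg hc'0 ha.le), ENNReal.ofReal_mul hc'0,
      ENNReal.ofReal_mul h1c]
  have e2 : ENNReal.ofReal (((1-(c':ℝ))*a + ε*2) * ((c:ℝ)*b + ε*2)) =
      (ENNReal.ofReal (1-(c':ℝ)) * ENNReal.ofReal a + ENNReal.ofReal ε * ENNReal.ofReal 2) *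
      (ENNReal.ofReal (c:ℝ) * ENNReal.ofReal b + ENNReal.ofReal ε * ENNReal.ofReal 2) := by
    rw [ENNReal.ofReal_mul (by nlinarith : (0:ℝ) ≤ (1-(c':ℝ))*a + ε*2),
      ENNReal.ofReal_add (mul_nonneg h1c' ha.le) (by positivity),
      ENNReal.ofReal_add (mul_nonneg hc.le hb.le) (by positivity),
      ENNReal.ofReal_mul h1c', ENNReal.ofReal_mul hεpos.le,
      ENNReal.ofReal_mul hc.le]
  have etwo : (ENNReal.ofReal 2 : ℝ≥0∞) = 2 := by norm_num
  have hchain : ENNReal.ofReal ((c':ℝ) * a * ((1-(c:ℝ)) * b)) ≤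
      ENNReal.ofReal (((1-(c':ℝ))*a + ε*2) * ((c:ℝ)*b + ε*2)) := by
    rw [e1, e2, etwo]
    calc ENNReal.ofReal (c':ℝ) * ENNReal.ofReal a *
          (ENNReal.ofReal (1-(c:ℝ)) * ENNReal.ofReal b)
        = ENNReal.ofReal (c':ℝ) * (μ + ν) A * (ENNReal.ofReal (1-(c:ℝ)) * (μ + ν) B) := by
          rw [hmA, hmB]
      _ ≤ A1 * B2 := mul_le_mul' lbA1 lbB2
      _ ≤ B1 * A2 := hcancel
      _ ≤ (ENNReal.ofReal (1-(c':ℝ)) * (μ + ν) A + ENNReal.ofReal ε * 2) *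
            (ENNReal.ofReal (c:ℝ) * (μ + ν) B + ENNReal.ofReal ε * 2) :=
          mul_le_mul' ubB1 ubA2
      _ = (ENNReal.ofReal (1-(c':ℝ)) * ENNReal.ofReal a + ENNReal.ofReal ε * 2) *
            (ENNReal.ofReal (c:ℝ) * ENNReal.ofReal b + ENNReal.ofReal ε * 2) := by
          rw [hmA, hmB]
  have hfin : (c':ℝ) * a * ((1-(c:ℝ)) * b) ≤ ((1-(c':ℝ))*a + ε*2) * ((c:ℝ)*b + ε*2) := by
    refine (ENNReal.ofReal_le_ofReal_iff ?_).1 hchain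
    have h1 : (0:ℝ) < (1-(c':ℝ))*a + ε*2 := by nlinarith
    have h2 : (0:ℝ) < (c:ℝ)*b + ε*2 := by nlinarith
    exact (mul_pos h1 h2).le
  linarith

lemma aux_backward {μ ν : Measure ℝ} [IsProbabilityMeasure μ] [IsProbabilityMeasure ν]
    (hksd : ∀ h : ℝ → ℝ, Measurable h → (∃ ε > (0:ℝ), ∀ x, ε ≤ h x) → (∃ C, ∀ x, h x ≤ C) →
      ∀ t : ℝ,
      (∫ x, (Iic t).indicator h x ∂μ) * (∫ x, h x ∂ν) ≤
        (∫ x, (Iic t).indicator h x ∂ν) * (∫ x, h x ∂μ)) :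
    ∃ S : Set ℝ, (μ + ν) S = 0 ∧ ∀ x, x ∉ S → ∀ y, y ∉ S → x ≤ y →
      μ.rnDeriv (μ + ν) x / ν.rnDeriv (μ + ν) x ≤
        μ.rnDeriv (μ + ν) y / ν.rnDeriv (μ + ν) y := by
  classical
  set N : ℚ × ℚ × ℚ → Set ℝ := fun q =>
    if 0 < (q.1:ℝ) ∧ (q.1:ℝ) < (q.2.1:ℝ) ∧ (q.2.1:ℝ) < 1 then
      (if (μ + ν) (Iic (q.2.2:ℝ) ∩ {x | ENNReal.ofReal (q.2.1:ℝ) < μ.rnDeriv (μ + ν) x}) = 0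
       then Iic (q.2.2:ℝ) ∩ {x | ENNReal.ofReal (q.2.1:ℝ) < μ.rnDeriv (μ + ν) x}
       else Ioi (q.2.2:ℝ) ∩ {x | μ.rnDeriv (μ + ν) x < ENNReal.ofReal (q.1:ℝ)})
    else ∅ with hNdef
  have hNnull : ∀ q, (μ + ν) (N q) = 0 := by
    intro q
    rw [hNdef]
    dsimp only
    split_ifs with h1 h2
    · exact h2
    · rcases aux_claim hksd q.1 q.2.1 q.2.2 h1.1 h1.2.1 h1.2.2 with hA | hB
      · exact absurd hA h2
      · exact hB
    · exact measure_empty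
  refine ⟨(⋃ q, N q) ∪ {x | ¬(μ.rnDeriv (μ + ν) x ≤ 1 ∧
      ν.rnDeriv (μ + ν) x = 1 - μ.rnDeriv (μ + ν) x)},
    measure_union_null (measure_iUnion_null hNnull) (ae_iff.1 aux_fg), ?_⟩
  intro x hx y hy hxy
  have hxE : μ.rnDeriv (μ + ν) x ≤ 1 ∧ ν.rnDeriv (μ + ν) x = 1 - μ.rnDeriv (μ + ν) x := by
    by_contra hcon; exact hx (Or.inr hcon)
  have hyE : μ.rnDeriv (μ + ν) y ≤ 1 ∧ ν.rnDeriv (μ + ν) y = 1 - μ.rnDeriv (μ + ν) y := by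
    by_contra hcon; exact hy (Or.inr hcon)
  rw [hxE.2, hyE.2]
  refine (aux_ratio_iff hxE.1 hyE.1).2 ?_
  by_contra hlt
  rw [not_le] at hlt
  have hxt : μ.rnDeriv (μ + ν) x ≠ ⊤ := (hxE.1.trans_lt ENNReal.one_lt_top).ne
  have hyt : μ.rnDeriv (μ + ν) y ≠ ⊤ := (hyE.1.trans_lt ENNReal.one_lt_top).ne
  have hne : x ≠ y := by
    intro he; rw [he] at hlt; exact absurd hlt (lt_irrefl _)
  have hxy' : x < y := lt_of_le_of_ne hxy hne
  obtain ⟨s, hs1, hs2⟩ := exists_rat_btwn hxy'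
  have htR : (μ.rnDeriv (μ + ν) y).toReal < (μ.rnDeriv (μ + ν) x).toReal :=
    ENNReal.toReal_strict_mono hxt hlt
  obtain ⟨c, hc1, hc2⟩ := exists_rat_btwn htR
  obtain ⟨c', hc'1, hc'2⟩ := exists_rat_btwn hc2
  have hc0 : 0 < (c:ℝ) := lt_of_le_of_lt ENNReal.toReal_nonneg hc1
  have hcx1 : (c':ℝ) < 1 := by
    refine lt_of_lt_of_le hc'2 ?_
    calc (μ.rnDeriv (μ + ν) x).toReal ≤ (1:ℝ≥0∞).toReal :=
          ENNReal.toReal_mono ENNReal.one_ne_top hxE.1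
      _ = 1 := ENNReal.toReal_one
  have hyB : μ.rnDeriv (μ + ν) y < ENNReal.ofReal (c:ℝ) :=
    (ENNReal.lt_ofReal_iff_toReal_lt hyt).2 hc1
  have hxA : ENNReal.ofReal (c':ℝ) < μ.rnDeriv (μ + ν) x :=
    (ENNReal.ofReal_lt_iff_lt_toReal (hc0.trans hc'1).le hxt).2 hc'2
  have hxN : x ∉ N (c, c', s) := fun hmem => hx (Or.inl (mem_iUnion.2 ⟨(c, c', s), hmem⟩))
  have hyN : y ∉ N (c, c', s) := fun hmem => hy (Or.inl (mem_iUnion.2 ⟨(c, c', s), hmem⟩))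
  rw [hNdef] at hxN hyN
  dsimp only at hxN hyN
  rw [if_pos ⟨hc0, hc'1, hcx1⟩] at hxN hyN
  by_cases h0 : (μ + ν) (Iic ((s:ℚ):ℝ) ∩
      {x | ENNReal.ofReal ((c':ℚ):ℝ) < μ.rnDeriv (μ + ν) x}) = 0
  · rw [if_pos h0] at hxN
    exact hxN ⟨mem_Iic.2 hs1.le, hxA⟩
  · rw [if_neg h0] at hyN
    exact hyN ⟨mem_Ioi.2 hs2, hyB⟩

/-- **Lemma A.3, MLRP ⟺ KSD (klinostochastic dominance).**  For real-valued random
variables `X` and `Y`, `law(X) ≽_lr law(Y)` holds if and only if for every measurable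
weight function `h` with `h(X) > 0` a.s., `h(Y) > 0` a.s., `0 < E[h(X)] < ∞`, and
`0 < E[h(Y)] < ∞`, the tilted distribution `h ⊙ X` first-order stochastically dominates
`h ⊙ Y`:
`E[1(X ≤ t)·h(X)] / E[h(X)] ≤ E[1(Y ≤ t)·h(Y)] / E[h(Y)]` for all `t : ℝ`. -/
theorem mlrp_iff_klinostochasticDominance
    {Ω : Type*} [MeasurableSpace Ω] (P : Measure Ω) [IsProbabilityMeasure P]
    (X Y : Ω → ℝ) (hX : Measurable X) (hY : Measurable Y) :
    MLRP (P.map X) (P.map Y) ↔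
      ∀ h : ℝ → ℝ, Measurable h →
        (∀ᵐ ω ∂P, 0 < h (X ω)) → (∀ᵐ ω ∂P, 0 < h (Y ω)) →
        Integrable (fun ω => h (X ω)) P → Integrable (fun ω => h (Y ω)) P →
        0 < (∫ ω, h (X ω) ∂P) → 0 < (∫ ω, h (Y ω) ∂P) →
        ∀ t : ℝ,
          (∫ ω, (Iic t).indicator h (X ω) ∂P) / (∫ ω, h (X ω) ∂P) ≤
            (∫ ω, (Iic t).indicator h (Y ω) ∂P) / (∫ ω, h (Y ω) ∂P) := by
  haveI : IsProbabilityMeasure (P.map X) := Measure.isProbabilityMeasure_map hX.aemeasurable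
  haveI : IsProbabilityMeasure (P.map Y) := Measure.isProbabilityMeasure_map hY.aemeasurable
  constructor
  · intro hmlrp h hmeas hposX hposY hintX hintY hEX hEY t
    have hposμ : ∀ᵐ x ∂(P.map X), 0 ≤ h x :=
      (ae_map_iff hX.aemeasurable (measurableSet_le measurable_const hmeas)).2
        (hposX.mono fun ω hω => hω.le)
    have hposν : ∀ᵐ x ∂(P.map Y), 0 ≤ h x :=
      (ae_map_iff hY.aemeasurable (measurableSet_le measurable_const hmeas)).2
        (hposY.mono fun ω hω => hω.le)
    have hintμ : Integrable h (P.map X) :=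
      (integrable_map_measure hmeas.aestronglyMeasurable hX.aemeasurable).2 hintX
    have hintν : Integrable h (P.map Y) :=
      (integrable_map_measure hmeas.aestronglyMeasurable hY.aemeasurable).2 hintY
    have key := aux_forward hmlrp hmeas hposμ hposν hintμ hintν t
    have e1 : ∫ ω, (Iic t).indicator h (X ω) ∂P = ∫ x, (Iic t).indicator h x ∂(P.map X) :=
      (integral_map hX.aemeasurable
        (hmeas.indicator measurableSet_Iic).aestronglyMeasurable).symm
    have e2 : ∫ ω, h (X ω) ∂P = ∫ x, h x ∂(P.map X) :=
      (integral_map hX.aemeasurable hmeas.aestronglyMeasurable).symm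
    have e3 : ∫ ω, (Iic t).indicator h (Y ω) ∂P = ∫ x, (Iic t).indicator h x ∂(P.map Y) :=
      (integral_map hY.aemeasurable
        (hmeas.indicator measurableSet_Iic).aestronglyMeasurable).symm
    have e4 : ∫ ω, h (Y ω) ∂P = ∫ x, h x ∂(P.map Y) :=
      (integral_map hY.aemeasurable hmeas.aestronglyMeasurable).symm
    rw [e2] at hEX
    rw [e4] at hEY
    rw [e1, e2, e3, e4, div_le_div_iff₀ hEX hEY]
    exact key
  · intro hksd
    refine aux_backward ?_
    intro h hmeas hlb hub t
    obtain ⟨ε, hε, hlb⟩ := hlb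
    obtain ⟨C, hub⟩ := hub
    have hpos : ∀ x, 0 ≤ h x := fun x => hε.le.trans (hlb x)
    have hintX : Integrable (fun ω => h (X ω)) P := by
      refine (integrable_const C).mono' (hmeas.comp hX).aestronglyMeasurable
        (ae_of_all _ fun ω => ?_)
      rw [Real.norm_eq_abs, abs_of_nonneg (hpos _)]; exact hub _
    have hintY : Integrable (fun ω => h (Y ω)) P := by
      refine (integrable_const C).mono' (hmeas.comp hY).aestronglyMeasurable
        (ae_of_all _ fun ω => ?_)
      rw [Real.norm_eq_abs, abs_of_nonneg (hpos _)]; exact hub _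
    have hEX : 0 < ∫ ω, h (X ω) ∂P := by
      refine lt_of_lt_of_le hε ?_
      calc ε = ∫ _, ε ∂P := by simp
        _ ≤ ∫ ω, h (X ω) ∂P := integral_mono (integrable_const ε) hintX fun ω => hlb _
    have hEY : 0 < ∫ ω, h (Y ω) ∂P := by
      refine lt_of_lt_of_le hε ?_
      calc ε = ∫ _, ε ∂P := by simp
        _ ≤ ∫ ω, h (Y ω) ∂P := integral_mono (integrable_const ε) hintY fun ω => hlb _
    have key := hksd h hmeas (ae_of_all _ fun ω => hε.trans_le (hlb _))
      (ae_of_all _ fun ω => hε.trans_le (hlb _)) hintX hintY hEX hEY t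
    rw [div_le_div_iff₀ hEX hEY] at key
    rw [integral_map hX.aemeasurable
        (hmeas.indicator measurableSet_Iic).aestronglyMeasurable,
      integral_map hY.aemeasurable
        (hmeas.indicator measurableSet_Iic).aestronglyMeasurable,
      integral_map hX.aemeasurable hmeas.aestronglyMeasurable,
      integral_map hY.aemeasurable hmeas.aestronglyMeasurable]
    exact key
end

section
/- Let X and Y be real-valued random variables, let Z ~ Bernoulli(p) with 0 < p < 1 be independent of (X, Y), and let W := Z·X + (1 − Z)·Y. Then law(X) ≽_lr law(Y) (the monotone likelihood ratio property with law(X) dominating) holds if and only if there is a version of the conditional probability g(w) := Pr(Z = 1 | W = w) that is non-decreasing law(W)-almost surely. -/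
open MeasureTheory ProbabilityTheory Set
open scoped ENNReal NNReal

private lemma ennreal_div_le_div_iff {x y z w : ℝ≥0∞} (hy0 : y ≠ 0) (hyt : y ≠ ∞)
    (hw0 : w ≠ 0) (hwt : w ≠ ∞) :
    x / y ≤ z / w ↔ x * w ≤ z * y := by
  rw [ENNReal.div_le_iff hy0 hyt, div_eq_mul_inv, mul_right_comm, ← div_eq_mul_inv,
    ENNReal.le_div_iff_mul_le (Or.inl hw0) (Or.inl hwt)]

private lemma key_arith {pp qq a b c d : ℝ≥0∞} (hpp0 : pp ≠ 0) (hppt : pp ≠ ∞)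
    (hqq0 : qq ≠ 0) (hqqt : qq ≠ ∞)
    (ha : a ≠ ∞) (hb : b ≠ ∞) (hc : c ≠ ∞) (hd : d ≠ ∞)
    (hab : a + b ≠ 0) (hcd : c + d ≠ 0) :
    ((pp * a) / (pp * a + qq * b)).toReal ≤ ((pp * c) / (pp * c + qq * d)).toReal
      ↔ a / b ≤ c / d := by
  have hD1ne : pp * a + qq * b ≠ 0 := by
    intro h
    rw [add_eq_zero, mul_eq_zero, mul_eq_zero] at h
    exact hab (by rw [add_eq_zero]; exact ⟨h.1.resolve_left hpp0, h.2.resolve_left hqq0⟩)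
  have hD2ne : pp * c + qq * d ≠ 0 := by
    intro h
    rw [add_eq_zero, mul_eq_zero, mul_eq_zero] at h
    exact hcd (by rw [add_eq_zero]; exact ⟨h.1.resolve_left hpp0, h.2.resolve_left hqq0⟩)
  have hD1t : pp * a + qq * b ≠ ∞ :=
    ENNReal.add_ne_top.2 ⟨ENNReal.mul_ne_top hppt ha, ENNReal.mul_ne_top hqqt hb⟩
  have hD2t : pp * c + qq * d ≠ ∞ :=
    ENNReal.add_ne_top.2 ⟨ENNReal.mul_ne_top hppt hc, ENNReal.mul_ne_top hqqt hd⟩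
  rw [ENNReal.toReal_le_toReal (ENNReal.div_lt_top (ENNReal.mul_ne_top hppt ha) hD1ne).ne
    (ENNReal.div_lt_top (ENNReal.mul_ne_top hppt hc) hD2ne).ne]
  rw [ennreal_div_le_div_iff hD1ne hD1t hD2ne hD2t]
  have e1 : pp * a * (pp * c + qq * d) = pp * a * (pp * c) + pp * qq * (a * d) := by ring
  have e2 : pp * c * (pp * a + qq * b) = pp * a * (pp * c) + pp * qq * (c * b) := by ring
  rw [e1, e2, ENNReal.add_le_add_iff_left
      (ENNReal.mul_ne_top (ENNReal.mul_ne_top hppt ha) (ENNReal.mul_ne_top hppt hc)),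
    ENNReal.mul_le_mul_iff_right (mul_ne_zero hpp0 hqq0) (ENNReal.mul_ne_top hppt hqqt)]
  rcases eq_or_ne b 0 with hb0 | hb0
  · have ha0 : a ≠ 0 := by simpa [hb0] using hab
    rcases eq_or_ne d 0 with hd0 | hd0
    · have hc0 : c ≠ 0 := by simpa [hd0] using hcd
      simp [hb0, hd0, ENNReal.div_zero ha0, ENNReal.div_zero hc0]
    · constructor
      · intro h
        exfalso
        rw [hb0, mul_zero, nonpos_iff_eq_zero, mul_eq_zero] at h
        exact h.elim ha0 hd0
      · intro h
        exfalso
        rw [hb0, ENNReal.div_zero ha0, top_le_iff] at h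
        exact (ENNReal.div_lt_top hc hd0).ne h
  · rcases eq_or_ne d 0 with hd0 | hd0
    · have hc0 : c ≠ 0 := by simpa [hd0] using hcd
      simp [hd0, ENNReal.div_zero hc0, le_top]
    · exact (ennreal_div_le_div_iff hb0 hb hd0 hd).symm

/-- **Lemma A.3, MLRP ⟺ MCP (monotone conditional probability).**
Let `X`, `Y` be real random variables, `Z ~ Bernoulli(p)` with `0 < p < 1` independent of
the pair `(X, Y)`, and `W := Z·X + (1 − Z)·Y`.  Then `law(X) ≽_lr law(Y)` iff there is a
version `g` of the conditional probability `w ↦ Pr(Z = 1 | W = w)` (i.e. a measurable `g`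
with `Pr(Z = 1, W ∈ s) = ∫_s g d(law W)` for every Borel `s`) that is non-decreasing
`law(W)`-almost surely (non-decreasing off a `law(W)`-null set). -/
theorem mlrp_iff_monotoneConditionalProbability
    {Ω : Type*} [MeasurableSpace Ω] (P : Measure Ω) [IsProbabilityMeasure P]
    (X Y Z W : Ω → ℝ) (hX : Measurable X) (hY : Measurable Y) (hZ : Measurable Z)
    (p : ℝ) (hp : p ∈ Ioo (0:ℝ) 1)
    (hZval : ∀ ω, Z ω = 0 ∨ Z ω = 1)
    (hZp : P {ω | Z ω = 1} = ENNReal.ofReal p)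
    (hindep : IndepFun Z (fun ω => (X ω, Y ω)) P)
    (hW : ∀ ω, W ω = Z ω * X ω + (1 - Z ω) * Y ω) :
    MLRP (P.map X) (P.map Y) ↔
      ∃ g : ℝ → ℝ, Measurable g ∧
        (∀ s : Set ℝ, MeasurableSet s →
          (P ({ω | Z ω = 1} ∩ {ω | W ω ∈ s})).toReal = ∫ w in s, g w ∂(P.map W)) ∧
        ∃ S : Set ℝ, (P.map W) S = 0 ∧
          ∀ x, x ∉ S → ∀ y, y ∉ S → x ≤ y → g x ≤ g y := by
  obtain ⟨hp0, hp1⟩ := hp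
  have hWm : Measurable W := by
    have hWeq : W = fun ω => Z ω * X ω + (1 - Z ω) * Y ω := funext hW
    rw [hWeq]; exact (hZ.mul hX).add ((measurable_const.sub hZ).mul hY)
  unfold MLRP
  set μ0 := P.map X with hμ0
  set μ1 := P.map Y with hμ1
  set ν : Measure ℝ := μ0 + μ1 with hν
  haveI : IsProbabilityMeasure μ0 := Measure.isProbabilityMeasure_map hX.aemeasurable
  haveI : IsProbabilityMeasure μ1 := Measure.isProbabilityMeasure_map hY.aemeasurable
  haveI : IsProbabilityMeasure (P.map W) := Measure.isProbabilityMeasure_map hWm.aemeasurable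
  set f0 := μ0.rnDeriv ν with hf0def
  set f1 := μ1.rnDeriv ν with hf1def
  have hf0m : Measurable f0 := Measure.measurable_rnDeriv _ _
  have hf1m : Measurable f1 := Measure.measurable_rnDeriv _ _
  set pp := ENNReal.ofReal p with hppdef
  set qq := ENNReal.ofReal (1 - p) with hqqdef
  have hpp0 : pp ≠ 0 := by
    rw [hppdef, ne_eq, ENNReal.ofReal_eq_zero, not_le]; exact hp0
  have hppt : pp ≠ ∞ := ENNReal.ofReal_ne_top
  have hqq0 : qq ≠ 0 := by
    rw [hqqdef, ne_eq, ENNReal.ofReal_eq_zero, not_le]; linarith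
  have hqqt : qq ≠ ∞ := ENNReal.ofReal_ne_top
  have hac0 : μ0 ≪ ν := Measure.absolutelyContinuous_of_le (Measure.le_add_right le_rfl)
  have hac1 : μ1 ≪ ν := Measure.absolutelyContinuous_of_le (Measure.le_add_left le_rfl)
  have hwd0 : ν.withDensity f0 = μ0 := Measure.withDensity_rnDeriv_eq _ _ hac0
  have hwd1 : ν.withDensity f1 = μ1 := Measure.withDensity_rnDeriv_eq _ _ hac1
  have hsum1 : ∀ᵐ x ∂ν, f0 x + f1 x = 1 := by
    filter_upwards [Measure.rnDeriv_add μ0 μ1 ν, Measure.rnDeriv_self ν] with x h1 h2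
    have h3 : ν.rnDeriv ν x = (μ0.rnDeriv ν + μ1.rnDeriv ν) x := by rw [hν]; exact h1
    rw [Pi.add_apply] at h3
    rw [hf0def, hf1def, ← h3, h2]
  set D : ℝ → ℝ≥0∞ := fun x => pp * f0 x + qq * f1 x with hDdef
  have hDm : Measurable D := (hf0m.const_mul pp).add (hf1m.const_mul qq)
  set G : ℝ → ℝ≥0∞ := fun x => pp * f0 x / D x with hGdef
  have hGm : Measurable G := (hf0m.const_mul pp).div hDm
  have hGle : ∀ x, G x ≤ 1 := fun x =>
    ENNReal.div_le_of_le_mul (by rw [one_mul]; exact self_le_add_right _ _)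
  -- the set where Z = 1 / Z = 0
  have hZ1meas : MeasurableSet {ω | Z ω = 1} := hZ (measurableSet_singleton 1)
  have hZ01 : {ω | Z ω = 0} = {ω | Z ω = 1}ᶜ := by
    ext ω
    rcases hZval ω with h | h <;> simp [h, mem_setOf_eq]
  have hPZ0 : P {ω | Z ω = 0} = qq := by
    rw [hZ01, prob_compl_eq_one_sub hZ1meas, hZp, hqqdef,
      ENNReal.ofReal_sub 1 hp0.le, ENNReal.ofReal_one]
  -- key decompositions
  have hPZW : ∀ s : Set ℝ, MeasurableSet s →
      P ({ω | Z ω = 1} ∩ W ⁻¹' s) = pp * μ0 s := by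
    intro s hs
    have heq : {ω | Z ω = 1} ∩ W ⁻¹' s
        = Z ⁻¹' {1} ∩ (fun ω => (X ω, Y ω)) ⁻¹' (s ×ˢ (univ : Set ℝ)) := by
      ext ω
      simp only [mem_inter_iff, mem_setOf_eq, mem_preimage, mem_singleton_iff,
        mem_prod, mem_univ, and_true]
      constructor
      · rintro ⟨hz, hw⟩
        have hwx : W ω = X ω := by rw [hW ω, hz]; ring
        exact ⟨hz, by rwa [hwx] at hw⟩
      · rintro ⟨hz, hx⟩
        have hwx : W ω = X ω := by rw [hW ω, hz]; ring
        exact ⟨hz, by rwa [hwx]⟩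
    rw [heq, hindep.measure_inter_preimage_eq_mul _ _ (measurableSet_singleton 1)
      (hs.prod MeasurableSet.univ)]
    have h1 : Z ⁻¹' {1} = {ω | Z ω = 1} := rfl
    have h2 : (fun ω => (X ω, Y ω)) ⁻¹' (s ×ˢ (univ : Set ℝ)) = X ⁻¹' s := by
      ext ω; simp
    rw [h1, h2, hZp, hμ0, Measure.map_apply hX hs]
  have hPZW0 : ∀ s : Set ℝ, MeasurableSet s →
      P ({ω | Z ω = 0} ∩ W ⁻¹' s) = qq * μ1 s := by
    intro s hs
    have heq : {ω | Z ω = 0} ∩ W ⁻¹' s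
        = Z ⁻¹' {0} ∩ (fun ω => (X ω, Y ω)) ⁻¹' ((univ : Set ℝ) ×ˢ s) := by
      ext ω
      simp only [mem_inter_iff, mem_setOf_eq, mem_preimage, mem_singleton_iff,
        mem_prod, mem_univ, true_and]
      constructor
      · rintro ⟨hz, hw⟩
        have hwy : W ω = Y ω := by rw [hW ω, hz]; ring
        exact ⟨hz, by rwa [hwy] at hw⟩
      · rintro ⟨hz, hy⟩
        have hwy : W ω = Y ω := by rw [hW ω, hz]; ring
        exact ⟨hz, by rwa [hwy]⟩
    rw [heq, hindep.measure_inter_preimage_eq_mul _ _ (measurableSet_singleton 0)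
      (MeasurableSet.univ.prod hs)]
    have h1 : Z ⁻¹' {0} = {ω | Z ω = 0} := rfl
    have h2 : (fun ω => (X ω, Y ω)) ⁻¹' ((univ : Set ℝ) ×ˢ s) = Y ⁻¹' s := by
      ext ω; simp
    rw [h1, h2, hPZ0, hμ1, Measure.map_apply hY hs]
  have hmapW : P.map W = pp • μ0 + qq • μ1 := by
    ext s hs
    rw [Measure.map_apply hWm hs]
    have hsplit : W ⁻¹' s
        = ({ω | Z ω = 1} ∩ W ⁻¹' s) ∪ ({ω | Z ω = 0} ∩ W ⁻¹' s) := by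
      ext ω
      rcases hZval ω with h | h <;>
        simp [mem_setOf_eq, h, mem_inter_iff, mem_union]
    have hdisj : Disjoint ({ω | Z ω = 1} ∩ W ⁻¹' s) ({ω | Z ω = 0} ∩ W ⁻¹' s) := by
      rw [disjoint_left]
      rintro ω ⟨h1, -⟩ ⟨h0, -⟩
      simp only [mem_setOf_eq] at h1 h0
      rw [h0] at h1; norm_num at h1
    rw [hsplit, measure_union hdisj ((hZ (measurableSet_singleton 0)).inter (hWm hs)),
      hPZW s hs, hPZW0 s hs]
    simp [Measure.add_apply, Measure.smul_apply, smul_eq_mul]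
  have hmapW' : P.map W = ν.withDensity D := by
    rw [hmapW]
    have h1 : ν.withDensity (pp • f0) = pp • μ0 := by rw [withDensity_smul pp hf0m, hwd0]
    have h2 : ν.withDensity (qq • f1) = qq • μ1 := by rw [withDensity_smul qq hf1m, hwd1]
    rw [← h1, ← h2, ← withDensity_add_left (hf0m.const_smul pp)]
    congr 1
  have hWac : P.map W ≪ ν := by
    rw [hmapW']; exact withDensity_absolutelyContinuous ν D
  -- the bad set N
  set N : Set ℝ := {x | ¬ f0 x + f1 x = 1} with hNdef
  have hNmeas : MeasurableSet N := by
    have : N = ((fun x => f0 x + f1 x) ⁻¹' {1})ᶜ := by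
      ext x; simp [hNdef]
    rw [this]
    exact ((hf0m.add hf1m) (measurableSet_singleton 1)).compl
  have hνN : ν N = 0 := ae_iff.mp hsum1
  -- ν-null from (P.map W)-null
  have hνac : ∀ A : Set ℝ, P.map W A = 0 → ν A = 0 := by
    intro A hA
    obtain ⟨B, hAB, hBmeas, hBeq⟩ := exists_measurable_superset (P.map W) A
    rw [hA] at hBeq
    have hle : min pp qq * ν (B \ N) ≤ P.map W (B \ N) := by
      rw [hmapW', withDensity_apply _ (hBmeas.diff hNmeas)]
      calc min pp qq * ν (B \ N) = ∫⁻ _ in B \ N, min pp qq ∂ν :=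
            (setLIntegral_const _ _).symm
        _ ≤ ∫⁻ x in B \ N, D x ∂ν := by
            refine setLIntegral_mono hDm fun x hx => ?_
            have hx1 : f0 x + f1 x = 1 := not_not.mp hx.2
            calc min pp qq = min pp qq * (f0 x + f1 x) := by rw [hx1, mul_one]
              _ = min pp qq * f0 x + min pp qq * f1 x := by rw [mul_add]
              _ ≤ pp * f0 x + qq * f1 x := by
                  gcongr
                  exacts [min_le_left _ _, min_le_right _ _]
    have hBN : ν (B \ N) = 0 := by
      have h0 : min pp qq * ν (B \ N) = 0 :=
        le_antisymm (hle.trans (le_of_le_of_eq (measure_mono diff_subset) hBeq)) zero_le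
      have hmin0 : min pp qq ≠ 0 := by
        rcases min_choice pp qq with h | h <;> rw [h] <;> assumption
      exact (mul_eq_zero.mp h0).resolve_left hmin0
    have : ν A ≤ ν (B ∩ N) + ν (B \ N) := by
      rw [measure_inter_add_diff B hNmeas]; exact measure_mono hAB
    have hBNle : ν (B ∩ N) ≤ 0 := hνN ▸ measure_mono inter_subset_right
    exact le_antisymm (this.trans (by rw [hBN, le_zero_iff.mp hBNle, add_zero])) zero_le
  -- the canonical version and its integral identity
  have hint_eq : ∀ s : Set ℝ, MeasurableSet s →
      ∫ w in s, (G w).toReal ∂(P.map W) = (pp * μ0 s).toReal := by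
    intro s hs
    rw [integral_toReal (hGm.aemeasurable)
      (ae_of_all _ fun x => lt_of_le_of_lt (hGle x) ENNReal.one_lt_top)]
    congr 1
    calc ∫⁻ w in s, G w ∂(P.map W) = ∫⁻ w in s, G w ∂(ν.withDensity D) := by rw [hmapW']
      _ = ∫⁻ w in s, (D * G) w ∂ν := by
          rw [restrict_withDensity hs, lintegral_withDensity_eq_lintegral_mul _ hDm hGm]
      _ = ∫⁻ w in s, pp * f0 w ∂ν := by
          refine lintegral_congr_ae (ae_restrict_of_ae ?_)
          filter_upwards [hsum1] with x hx
          simp only [Pi.mul_apply, hGdef]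
          rcases eq_or_ne (D x) 0 with hD0 | hD0
          · have hzero : pp * f0 x = 0 :=
              le_antisymm (hD0 ▸ self_le_add_right _ _) zero_le
            simp [hD0, hzero]
          · have h0t : f0 x ≠ ∞ := fun h => by simp [h] at hx
            have h1t : f1 x ≠ ∞ := fun h => by simp [h] at hx
            have hDt : D x ≠ ∞ :=
              ENNReal.add_ne_top.2 ⟨ENNReal.mul_ne_top hppt h0t, ENNReal.mul_ne_top hqqt h1t⟩
            rw [mul_comm, ENNReal.div_mul_cancel hD0 hDt]
      _ = pp * ∫⁻ w in s, f0 w ∂ν := lintegral_const_mul pp hf0m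
      _ = pp * μ0 s := by rw [← withDensity_apply f0 hs, hwd0]
  have hpre : ∀ t : Set ℝ, {ω | W ω ∈ t} = W ⁻¹' t := fun _ => rfl
  -- monotonicity bridge
  have hbridge : ∀ x ∉ N, ∀ y ∉ N,
      ((G x).toReal ≤ (G y).toReal ↔ f0 x / f1 x ≤ f0 y / f1 y) := by
    intro x hx y hy
    simp only [hNdef, mem_setOf_eq, not_not] at hx hy
    have hx0t : f0 x ≠ ∞ := fun h => by simp [h] at hx
    have hx1t : f1 x ≠ ∞ := fun h => by simp [h] at hx
    have hy0t : f0 y ≠ ∞ := fun h => by simp [h] at hy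
    have hy1t : f1 y ≠ ∞ := fun h => by simp [h] at hy
    have hxne : f0 x + f1 x ≠ 0 := by rw [hx]; exact one_ne_zero
    have hyne : f0 y + f1 y ≠ 0 := by rw [hy]; exact one_ne_zero
    exact key_arith hpp0 hppt hqq0 hqqt hx0t hx1t hy0t hy1t hxne hyne
  constructor
  · rintro ⟨S, hS, hmono⟩
    refine ⟨fun x => (G x).toReal, hGm.ennreal_toReal, ?_, S ∪ N, ?_, ?_⟩
    · intro s hs
      rw [hint_eq s hs, hpre s, hPZW s hs]
    · exact hWac (measure_union_null hS hνN)
    · intro x hx y hy hxy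
      have hxS : x ∉ S := fun h => hx (Or.inl h)
      have hxN : x ∉ N := fun h => hx (Or.inr h)
      have hyS : y ∉ S := fun h => hy (Or.inl h)
      have hyN : y ∉ N := fun h => hy (Or.inr h)
      exact (hbridge x hxN y hyN).mpr (hmono x hxS y hyS hxy)
  · rintro ⟨g, hgm, hgint, S', hS', hmono⟩
    have hgl : Integrable g (P.map W) := by
      by_contra h
      have h0 := hgint univ MeasurableSet.univ
      rw [Measure.restrict_univ, integral_undef h, hpre univ, hPZW univ MeasurableSet.univ,
        measure_univ, mul_one, hppdef, ENNReal.toReal_ofReal hp0.le] at h0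
      exact hp0.ne' h0
    have hgg0 : g =ᵐ[P.map W] fun x => (G x).toReal := by
      have hG_int : Integrable (fun x => (G x).toReal) (P.map W) := by
        apply integrable_toReal_of_lintegral_ne_top hGm.aemeasurable
        refine ne_of_lt (lt_of_le_of_lt (lintegral_mono hGle) ?_)
        rw [lintegral_one]
        exact measure_lt_top _ _
      refine ae_eq_of_forall_setIntegral_eq_of_sigmaFinite
        (fun s hs _ => hgl.integrableOn) (fun s hs _ => hG_int.integrableOn) ?_
      intro s hs _
      rw [← hgint s hs, hpre s, hPZW s hs, hint_eq s hs]
    set E := {x | ¬ g x = (G x).toReal} with hEdef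
    have hE : P.map W E = 0 := ae_iff.mp hgg0
    refine ⟨S' ∪ E ∪ N, ?_, ?_⟩
    · exact measure_union_null (measure_union_null (hνac _ hS') (hνac _ hE)) hνN
    · intro x hx y hy hxy
      have hxS : x ∉ S' := fun h => hx (Or.inl (Or.inl h))
      have hxE : x ∉ E := fun h => hx (Or.inl (Or.inr h))
      have hxN : x ∉ N := fun h => hx (Or.inr h)
      have hyS : y ∉ S' := fun h => hy (Or.inl (Or.inl h))
      have hyE : y ∉ E := fun h => hy (Or.inl (Or.inr h))
      have hyN : y ∉ N := fun h => hy (Or.inr h)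
      have hgx : g x = (G x).toReal := not_not.mp hxE
      have hgy : g y = (G y).toReal := not_not.mp hyE
      refine (hbridge x hxN y hyN).mp ?_
      rw [← hgx, ← hgy]
      exact hmono x hxS y hyS hxy
end

section
/- Let μ0 and μ1 be Borel probability measures on ℝ with finite first moments that satisfy the monotone likelihood ratio property with μ0 dominating (μ0 ≽_lr μ1). Let d : ℝ → [0,1] be a non-decreasing function with ∫ d dμ0 > 0 and ∫ d dμ1 > 0. Then (∫ u·d(u) dμ1(u)) / (∫ d(u) dμ1(u)) ≤ (∫ u·d(u) dμ0(u)) / (∫ d(u) dμ0(u)). -/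
set_option maxHeartbeats 1000000


open MeasureTheory Set ENNReal

/-- Cross-multiplication for likelihood ratios in `ℝ≥0∞`: if `a + b = 1`, `c + e = 1`
and `a / b ≤ c / e`, then `a * e ≤ c * b`. -/
lemma ennreal_cross {a b c e : ℝ≥0∞} (hab : a + b = 1) (hce : c + e = 1)
    (h : a / b ≤ c / e) : a * e ≤ c * b := by
  have hbt : b ≠ ∞ := by
    intro hb; rw [hb] at hab; simp at hab
  have het : e ≠ ∞ := by
    intro hee; rw [hee] at hce; simp at hce
  have hct : c ≠ ∞ := by
    intro hc; rw [hc] at hce; simp at hce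
  by_cases he : e = 0
  · simp [he]
  by_cases hb : b = 0
  · by_cases ha0 : a = 0
    · simp [ha0]
    · exfalso
      have htop : a / b = ∞ := by
        rw [hb]; exact ENNReal.div_zero ha0
      have : c / e = ∞ := top_le_iff.mp (htop ▸ h)
      rcases ENNReal.div_eq_top.mp this with ⟨_, he0⟩ | ⟨hc, _⟩
      · exact he he0
      · exact hct hc
  · calc a * e = a / b * b * e := by rw [ENNReal.div_mul_cancel hb hbt]
    _ ≤ c / e * b * e := by
        exact mul_le_mul_left (mul_le_mul_left h b) e
    _ = c / e * e * b := by ring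
    _ = c * b := by rw [ENNReal.div_mul_cancel he het]

/-- **Eq. (hit-rate) in the proof of Theorem 1.**  Let `μ0` and `μ1` be Borel probability
measures on `ℝ` with finite first moments satisfying the MLRP with `μ0` dominating, and
let `d : ℝ → [0,1]` be a non-decreasing risk-decision curve with positive decision rate
under both measures.  Then the outcome rate under `μ1` is at most the outcome rate
under `μ0`. -/
theorem outcome_rate_le_of_mlrp
    (μ0 μ1 : Measure ℝ) [IsProbabilityMeasure μ0] [IsProbabilityMeasure μ1]
    (hμ0 : Integrable id μ0) (hμ1 : Integrable id μ1)
    (hmlrp : MLRP μ0 μ1)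
    (d : ℝ → ℝ) (hd : Monotone d) (hd01 : ∀ u, d u ∈ Icc (0:ℝ) 1)
    (h0 : 0 < ∫ u, d u ∂μ0) (h1 : 0 < ∫ u, d u ∂μ1) :
    (∫ u, u * d u ∂μ1) / (∫ u, d u ∂μ1) ≤ (∫ u, u * d u ∂μ0) / (∫ u, d u ∂μ0) := by
  obtain ⟨S, hS, hml⟩ := hmlrp
  set ν : Measure ℝ := μ0 + μ1 with hν
  have hac0 : μ0 ≪ ν := (Measure.le_add_right le_rfl).absolutelyContinuous
  have hac1 : μ1 ≪ ν := (Measure.le_add_left le_rfl).absolutelyContinuous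
  set g0 : ℝ → ℝ := fun u => (μ0.rnDeriv ν u).toReal with hg0def
  set g1 : ℝ → ℝ := fun u => (μ1.rnDeriv ν u).toReal with hg1def
  have hg0m : Measurable g0 := (Measure.measurable_rnDeriv _ _).ennreal_toReal
  have hg1m : Measurable g1 := (Measure.measurable_rnDeriv _ _).ennreal_toReal
  have hdm : Measurable d := hd.measurable
  -- the good set
  have hsum : ∀ᵐ u ∂ν, μ0.rnDeriv ν u + μ1.rnDeriv ν u = 1 := by
    filter_upwards [Measure.rnDeriv_add μ0 μ1 ν, Measure.rnDeriv_self ν] with u hu1 hu2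
    exact hu1.symm.trans hu2
  have hPae : ∀ᵐ u ∂ν, u ∉ S ∧ μ0.rnDeriv ν u + μ1.rnDeriv ν u = 1 :=
    (measure_eq_zero_iff_ae_notMem.mp hS).and hsum
  -- key real cross inequality at good points
  have key : ∀ x, (x ∉ S ∧ μ0.rnDeriv ν x + μ1.rnDeriv ν x = 1) →
      ∀ y, (y ∉ S ∧ μ0.rnDeriv ν y + μ1.rnDeriv ν y = 1) → x ≤ y →
      g0 x * g1 y ≤ g0 y * g1 x := by
    rintro x ⟨hxS, hxsum⟩ y ⟨hyS, hysum⟩ hxy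
    have hcross : μ0.rnDeriv ν x * μ1.rnDeriv ν y ≤ μ0.rnDeriv ν y * μ1.rnDeriv ν x :=
      ennreal_cross hxsum hysum (hml x hxS y hyS hxy)
    have h1t : μ0.rnDeriv ν y * μ1.rnDeriv ν x ≠ ∞ := by
      have hy : μ0.rnDeriv ν y ≤ 1 := le_trans le_self_add hysum.le
      have hx : μ1.rnDeriv ν x ≤ 1 := le_trans le_add_self hxsum.le
      have hle : μ0.rnDeriv ν y * μ1.rnDeriv ν x ≤ 1 := by
        simpa using mul_le_mul' hy hx
      exact (lt_of_le_of_lt hle ENNReal.one_lt_top).ne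
    have := ENNReal.toReal_mono h1t hcross
    rwa [ENNReal.toReal_mul, ENNReal.toReal_mul] at this
  -- bounds on densities
  have hg0le : ∀ᵐ u ∂ν, g0 u ≤ 1 ∧ g1 u ≤ 1 := by
    filter_upwards [hsum] with u hu
    have h0' : μ0.rnDeriv ν u ≤ 1 := le_trans le_self_add hu.le
    have h1' : μ1.rnDeriv ν u ≤ 1 := le_trans le_add_self hu.le
    constructor
    · simpa using ENNReal.toReal_mono (by norm_num) h0'
    · simpa using ENNReal.toReal_mono (by norm_num) h1'
  have hg0nn : ∀ u, 0 ≤ g0 u := fun u => ENNReal.toReal_nonneg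
  have hg1nn : ∀ u, 0 ≤ g1 u := fun u => ENNReal.toReal_nonneg
  -- integrable functions
  have hidν : Integrable id ν := hμ0.add_measure hμ1
  set F0 : ℝ → ℝ := fun u => g0 u * (u * d u) with hF0def
  set F1 : ℝ → ℝ := fun u => g1 u * (u * d u) with hF1def
  set G0 : ℝ → ℝ := fun u => g0 u * d u with hG0def
  set G1 : ℝ → ℝ := fun u => g1 u * d u with hG1def
  have habs : ∀ u (a b : ℝ), 0 ≤ a → a ≤ 1 → b ∈ Icc (0:ℝ) 1 → ‖a * (u * b)‖ ≤ ‖id u‖ := by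
    intro u a b ha ha1 hb
    rw [norm_mul, norm_mul]
    simp only [id_eq, Real.norm_eq_abs]
    calc |a| * (|u| * |b|) ≤ 1 * (|u| * 1) := by
          apply mul_le_mul (by rwa [abs_of_nonneg ha]) ?_ (by positivity) zero_le_one
          exact mul_le_mul_of_nonneg_left (by rw [abs_of_nonneg hb.1]; exact hb.2) (abs_nonneg u)
    _ = |u| := by ring
  have hF0i : Integrable F0 ν := by
    refine Integrable.mono' hidν.norm
      ((hg0m.mul (measurable_id.mul hdm)).aestronglyMeasurable) ?_
    filter_upwards [hg0le] with u hu
    exact habs u (g0 u) (d u) (hg0nn u) hu.1 (hd01 u)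
  have hF1i : Integrable F1 ν := by
    refine Integrable.mono' hidν.norm
      ((hg1m.mul (measurable_id.mul hdm)).aestronglyMeasurable) ?_
    filter_upwards [hg0le] with u hu
    exact habs u (g1 u) (d u) (hg1nn u) hu.2 (hd01 u)
  have hG0i : Integrable G0 ν := by
    refine Integrable.mono' (integrable_const (1:ℝ))
      ((hg0m.mul hdm).aestronglyMeasurable) ?_
    filter_upwards [hg0le] with u hu
    rw [norm_mul, Real.norm_eq_abs, Real.norm_eq_abs, abs_of_nonneg (hg0nn u),
      abs_of_nonneg (hd01 u).1]
    exact mul_le_one₀ hu.1 (hd01 u).1 (hd01 u).2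
  have hG1i : Integrable G1 ν := by
    refine Integrable.mono' (integrable_const (1:ℝ))
      ((hg1m.mul hdm).aestronglyMeasurable) ?_
    filter_upwards [hg0le] with u hu
    rw [norm_mul, Real.norm_eq_abs, Real.norm_eq_abs, abs_of_nonneg (hg1nn u),
      abs_of_nonneg (hd01 u).1]
    exact mul_le_one₀ hu.2 (hd01 u).1 (hd01 u).2
  -- values of the integrals
  have hA : ∫ u, F0 u ∂ν = ∫ u, u * d u ∂μ0 := by
    have := integral_rnDeriv_smul (f := fun x => x * d x) hac0
    simpa [smul_eq_mul] using this
  have hB : ∫ u, G0 u ∂ν = ∫ u, d u ∂μ0 := by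
    have := integral_rnDeriv_smul (f := fun x => d x) hac0
    simpa [smul_eq_mul] using this
  have hC : ∫ u, F1 u ∂ν = ∫ u, u * d u ∂μ1 := by
    have := integral_rnDeriv_smul (f := fun x => x * d x) hac1
    simpa [smul_eq_mul] using this
  have hD : ∫ u, G1 u ∂ν = ∫ u, d u ∂μ1 := by
    have := integral_rnDeriv_smul (f := fun x => d x) hac1
    simpa [smul_eq_mul] using this
  -- product measure
  set π : Measure (ℝ × ℝ) := ν.prod ν with hπ
  have hp1 : Integrable (fun z : ℝ × ℝ => F0 z.1 * G1 z.2) π := hF0i.mul_prod hG1i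
  have hp2 : Integrable (fun z : ℝ × ℝ => F1 z.1 * G0 z.2) π := hF1i.mul_prod hG0i
  have hp3 : Integrable (fun z : ℝ × ℝ => G1 z.1 * F0 z.2) π := hG1i.mul_prod hF0i
  have hp4 : Integrable (fun z : ℝ × ℝ => G0 z.1 * F1 z.2) π := hG0i.mul_prod hF1i
  have e1 : ∫ z, F0 z.1 * G1 z.2 ∂π = (∫ u, F0 u ∂ν) * (∫ u, G1 u ∂ν) :=
    integral_prod_mul F0 G1
  have e2 : ∫ z, F1 z.1 * G0 z.2 ∂π = (∫ u, F1 u ∂ν) * (∫ u, G0 u ∂ν) :=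
    integral_prod_mul F1 G0
  have e3 : ∫ z, G1 z.1 * F0 z.2 ∂π = (∫ u, G1 u ∂ν) * (∫ u, F0 u ∂ν) :=
    integral_prod_mul G1 F0
  have e4 : ∫ z, G0 z.1 * F1 z.2 ∂π = (∫ u, G0 u ∂ν) * (∫ u, F1 u ∂ν) :=
    integral_prod_mul G0 F1
  -- a.e. goodness on the product
  set P : ℝ → Prop := fun u => u ∉ S ∧ μ0.rnDeriv ν u + μ1.rnDeriv ν u = 1 with hPdef
  set T : Set ℝ := toMeasurable ν {u | ¬ P u} with hTdef
  have hTnull : ν T = 0 := by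
    rw [hTdef, measure_toMeasurable]
    exact hPae
  have hTmeas : MeasurableSet T := measurableSet_toMeasurable ν _
  have hgoodprod : ∀ᵐ z ∂π, P z.1 ∧ P z.2 := by
    have hbad : π ((T ×ˢ (univ : Set ℝ)) ∪ ((univ : Set ℝ) ×ˢ T)) = 0 := by
      refine le_antisymm (le_trans (measure_union_le _ _) ?_) zero_le
      rw [hπ, Measure.prod_prod, Measure.prod_prod, hTnull]
      simp
    filter_upwards [measure_eq_zero_iff_ae_notMem.mp hbad] with z hz
    rw [Set.mem_union, not_or] at hz
    constructor
    · by_contra hc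
      exact hz.1 (Set.mem_prod.mpr ⟨subset_toMeasurable ν _ hc, Set.mem_univ _⟩)
    · by_contra hc
      exact hz.2 (Set.mem_prod.mpr ⟨Set.mem_univ _, subset_toMeasurable ν _ hc⟩)
  -- the symmetrized integrand is nonnegative
  have hnonneg : 0 ≤ ∫ z, (F0 z.1 * G1 z.2 - F1 z.1 * G0 z.2
      + (G1 z.1 * F0 z.2 - G0 z.1 * F1 z.2)) ∂π := by
    refine integral_nonneg_of_ae ?_
    filter_upwards [hgoodprod] with z hz
    simp only [Pi.zero_apply]
    obtain ⟨hz1, hz2⟩ := hz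
    set u := z.1
    set v := z.2
    have hident : F0 u * G1 v - F1 u * G0 v + (G1 u * F0 v - G0 u * F1 v)
        = (u - v) * ((d u * d v) * (g0 u * g1 v - g1 u * g0 v)) := by
      simp only [hF0def, hF1def, hG0def, hG1def]
      ring
    rw [hident]
    have hdd : 0 ≤ d u * d v := mul_nonneg (hd01 u).1 (hd01 v).1
    rcases le_total u v with huv | hvu
    · have hk := key u hz1 v hz2 huv
      have h2' : g0 u * g1 v - g1 u * g0 v ≤ 0 := by nlinarith [hk]
      have h3 : 0 ≤ d u * d v * (-(g0 u * g1 v - g1 u * g0 v)) :=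
        mul_nonneg hdd (by linarith)
      have h4 : 0 ≤ (v - u) * (d u * d v * (-(g0 u * g1 v - g1 u * g0 v))) :=
        mul_nonneg (by linarith) h3
      nlinarith [h4]
    · have hk := key v hz2 u hz1 hvu
      have h1' : 0 ≤ u - v := by linarith
      have h2' : 0 ≤ g0 u * g1 v - g1 u * g0 v := by nlinarith [hk]
      exact mul_nonneg h1' (mul_nonneg hdd h2')
  -- split the integral
  have hsplit : ∫ z, (F0 z.1 * G1 z.2 - F1 z.1 * G0 z.2
      + (G1 z.1 * F0 z.2 - G0 z.1 * F1 z.2)) ∂π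
      = (∫ u, F0 u ∂ν) * (∫ u, G1 u ∂ν) - (∫ u, F1 u ∂ν) * (∫ u, G0 u ∂ν)
      + ((∫ u, G1 u ∂ν) * (∫ u, F0 u ∂ν) - (∫ u, G0 u ∂ν) * (∫ u, F1 u ∂ν)) := by
    have hq1 : Integrable (fun z : ℝ × ℝ => F0 z.1 * G1 z.2 - F1 z.1 * G0 z.2) π :=
      hp1.sub hp2
    have hq2 : Integrable (fun z : ℝ × ℝ => G1 z.1 * F0 z.2 - G0 z.1 * F1 z.2) π :=
      hp3.sub hp4
    rw [integral_add hq1 hq2, integral_sub hp1 hp2,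
      integral_sub hp3 hp4, e1, e2, e3, e4]
  rw [hsplit, hA, hB, hC, hD] at hnonneg
  rw [div_le_div_iff₀ h1 h0]
  nlinarith [hnonneg]
end

section
/- Let μ be a Borel probability measure on ℝ with finite first moment. Let H0 and H1 be probability distributions on the extended reals ℝ ∪ {−∞, +∞} satisfying the monotone likelihood ratio property with H0 dominating (H0 ≽_lr H1), and for g ∈ {0,1} define the risk-decision curves d_g(u) := Pr(H_g ≤ u) (the CDF of H_g). Assume ∫ d_g dμ > 0 for g ∈ {0,1}. Then (∫ u·d_1(u) dμ(u)) / (∫ d_1(u) dμ(u)) ≤ (∫ u·d_0(u) dμ(u)) / (∫ d_0(u) dμ(u)). -/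
open MeasureTheory Set

-- pointwise key from the monotone ratio
lemma mlrp_pointwise {f0 f1 : EReal → ENNReal} {s t : EReal}
    (h : f0 s / f1 s ≤ f0 t / f1 t)
    (h0t : f0 t < ⊤) (h1s : f1 s < ⊤) (h1t : f1 t < ⊤) :
    f0 s * f1 t ≤ f1 s * f0 t := by
  by_cases hz : f1 s = 0
  · by_cases hz0 : f0 s = 0
    · simp [hz0]
    · have htop : f0 t / f1 t = ⊤ := by
        have : f0 s / f1 s = ⊤ := by simp [hz, ENNReal.div_zero hz0]
        exact top_le_iff.mp (this ▸ h)
      rcases ENNReal.div_eq_top.mp htop with ⟨_, h1t0⟩ | ⟨h0top, _⟩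
      · simp [h1t0]
      · exact absurd h0top h0t.ne
  · by_cases hzt : f1 t = 0
    · simp [hzt]
    · calc f0 s * f1 t = (f0 s / f1 s) * f1 s * f1 t := by
            rw [ENNReal.div_mul_cancel hz h1s.ne]
        _ ≤ (f0 t / f1 t) * f1 s * f1 t := by
            exact mul_le_mul_left (mul_le_mul_left h _) _
        _ = (f0 t / f1 t) * f1 t * f1 s := by ring
        _ = f0 t * f1 s := by rw [ENNReal.div_mul_cancel hzt h1t.ne]
        _ = f1 s * f0 t := mul_comm _ _

lemma cross_cdf (H0 H1 : Measure EReal) [IsProbabilityMeasure H0] [IsProbabilityMeasure H1]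
    (hmlrp : MLRP H0 H1) {x y : ℝ} (hxy : x ≤ y) :
    H0 (Iic (x : EReal)) * H1 (Iic (y : EReal)) ≤
      H1 (Iic (x : EReal)) * H0 (Iic (y : EReal)) := by
  obtain ⟨S, hS, hmono⟩ := hmlrp
  set ν : Measure EReal := H0 + H1 with hν
  have h0ac : H0 ≪ ν := (Measure.AbsolutelyContinuous.refl H0).add_right H1
  have h1ac : H1 ≪ ν := by
    rw [hν]
    exact Measure.absolutelyContinuous_of_le (Measure.le_add_left le_rfl)
  set f0 := H0.rnDeriv ν with hf0
  set f1 := H1.rnDeriv ν with hf1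
  have hm0 : Measurable f0 := Measure.measurable_rnDeriv _ _
  have hm1 : Measurable f1 := Measure.measurable_rnDeriv _ _
  have hae : ∀ᵐ t ∂ν, t ∉ S ∧ f0 t < ⊤ ∧ f1 t < ⊤ := by
    filter_upwards [Measure.rnDeriv_lt_top H0 ν, Measure.rnDeriv_lt_top H1 ν,
      (measure_eq_zero_iff_ae_notMem (μ := ν) (s := S)).mp hS] with t h1 h2 h3
    exact ⟨h3, h1, h2⟩
  have hxy' : (x : EReal) ≤ (y : EReal) := EReal.coe_le_coe_iff.mpr hxy
  set A := Iic (x : EReal)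
  set B := Ioc (x : EReal) (y : EReal)
  have hAm : MeasurableSet A := measurableSet_Iic
  have hBm : MeasurableSet B := measurableSet_Ioc
  have hrep : ∀ (H : Measure EReal), IsFiniteMeasure H → H ≪ ν → ∀ s : Set EReal,
      H s = ∫⁻ t in s, H.rnDeriv ν t ∂ν := by
    intro H hfin hac s
    exact (Measure.setLIntegral_rnDeriv hac s).symm
  -- key: H0 A * H1 B ≤ H1 A * H0 B
  have key : H0 A * H1 B ≤ H1 A * H0 B := by
    rw [hrep H0 inferInstance h0ac A, hrep H1 inferInstance h1ac A, hrep H0 inferInstance h0ac B, hrep H1 inferInstance h1ac B]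
    rw [← lintegral_mul_const'' _ (hm0.aemeasurable.restrict),
        ← lintegral_mul_const'' _ (hm1.aemeasurable.restrict)]
    refine setLIntegral_mono_ae ((hm1.aemeasurable.restrict).mul_const _) ?_
    filter_upwards [hae] with s ⟨hsS, hs0, hs1⟩
    intro hsA
    rw [← lintegral_const_mul'' _ (hm1.aemeasurable.restrict),
        ← lintegral_const_mul'' _ (hm0.aemeasurable.restrict)]
    refine setLIntegral_mono_ae ((hm0.aemeasurable.restrict).const_mul _) ?_
    filter_upwards [hae] with t ⟨htS, ht0, ht1⟩
    intro htB
    have hst : s ≤ t := le_trans hsA (le_of_lt htB.1)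
    exact mlrp_pointwise (hmono s hsS t htS hst) ht0 hs1 ht1
  have hsplit : ∀ (H : Measure EReal), H (Iic (y : EReal)) = H A + H B := by
    intro H
    rw [← Iic_union_Ioc_eq_Iic hxy']
    exact measure_union (by
      simp only [A, B, disjoint_left]
      rintro a ha ⟨h1, _⟩
      exact absurd ha (not_le.mpr h1)) hBm
  rw [hsplit H0, hsplit H1]
  calc H0 A * (H1 A + H1 B) = H1 A * H0 A + H0 A * H1 B := by ring
    _ ≤ H1 A * H0 A + H1 A * H0 B := add_le_add_right key _
    _ = H1 A * (H0 A + H0 B) := by ring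

/-- **Second key inequality in Case 2 of the proof of Theorem 1.**
Let `μ` be a Borel probability measure on `ℝ` with finite first moment, and let
`H0, H1` be probability distributions on the extended reals satisfying the MLRP with
`H0` dominating.  Define the risk-decision curves `d_g(u) := Pr(H_g ≤ u)` (the CDFs of
the `H_g`), and assume both decision rates `∫ d_g dμ` are positive.  Then switching from
the dominated curve `d1` to the dominating curve `d0` can only increase the outcome
rate: `(∫ u·d1(u) dμ) / (∫ d1 dμ) ≤ (∫ u·d0(u) dμ) / (∫ d0 dμ)`. -/
theorem outcome_rate_le_of_mlrp_decision_curves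
    (μ : Measure ℝ) [IsProbabilityMeasure μ] (hμ : Integrable id μ)
    (H0 H1 : Measure EReal) [IsProbabilityMeasure H0] [IsProbabilityMeasure H1]
    (hmlrp : MLRP H0 H1)
    (d0 d1 : ℝ → ℝ)
    (hd0 : ∀ u : ℝ, d0 u = (H0 (Iic (u : EReal))).toReal)
    (hd1 : ∀ u : ℝ, d1 u = (H1 (Iic (u : EReal))).toReal)
    (h0 : 0 < ∫ u, d0 u ∂μ) (h1 : 0 < ∫ u, d1 u ∂μ) :
    (∫ u, u * d1 u ∂μ) / (∫ u, d1 u ∂μ) ≤ (∫ u, u * d0 u ∂μ) / (∫ u, d0 u ∂μ) := by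
  -- real cross inequality
  have hcross : ∀ u v : ℝ, u ≤ v → d0 u * d1 v ≤ d1 u * d0 v := by
    intro u v huv
    have h := cross_cdf H0 H1 hmlrp huv
    rw [hd0, hd0, hd1, hd1, ← ENNReal.toReal_mul, ← ENNReal.toReal_mul]
    exact ENNReal.toReal_mono
      (ENNReal.mul_ne_top (measure_ne_top _ _) (measure_ne_top _ _)) h
  -- pointwise inequality for the symmetrized integrand
  have key2 : ∀ u v : ℝ,
      u * d1 u * d0 v + v * d1 v * d0 u ≤ u * d0 u * d1 v + v * d0 v * d1 u := by
    intro u v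
    rcases le_total u v with huv | hvu
    · nlinarith [mul_nonneg (sub_nonneg.2 huv) (sub_nonneg.2 (hcross u v huv))]
    · nlinarith [mul_nonneg (sub_nonneg.2 hvu) (sub_nonneg.2 (hcross v u hvu))]
  -- measurability and integrability
  have hmono0 : Monotone d0 := by
    intro a b hab
    rw [hd0, hd0]
    exact ENNReal.toReal_mono (measure_ne_top _ _)
      (measure_mono (Iic_subset_Iic.2 (EReal.coe_le_coe_iff.2 hab)))
  have hmono1 : Monotone d1 := by
    intro a b hab
    rw [hd1, hd1]
    exact ENNReal.toReal_mono (measure_ne_top _ _)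
      (measure_mono (Iic_subset_Iic.2 (EReal.coe_le_coe_iff.2 hab)))
  have hb : ∀ (d : ℝ → ℝ) (H : Measure EReal), IsProbabilityMeasure H →
      (∀ u : ℝ, d u = (H (Iic (u : EReal))).toReal) → ∀ u, ‖d u‖ ≤ 1 := by
    intro d H hH hd u
    rw [hd, Real.norm_eq_abs, abs_of_nonneg ENNReal.toReal_nonneg]
    calc (H (Iic (u : EReal))).toReal ≤ (H univ).toReal :=
          ENNReal.toReal_mono (measure_ne_top _ _) (measure_mono (subset_univ _))
      _ = 1 := by simp
  have hi0 : Integrable d0 μ :=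
    (integrable_const (1 : ℝ)).mono hmono0.measurable.aestronglyMeasurable
      (ae_of_all _ (fun u => by simpa using hb d0 H0 inferInstance hd0 u))
  have hi1 : Integrable d1 μ :=
    (integrable_const (1 : ℝ)).mono hmono1.measurable.aestronglyMeasurable
      (ae_of_all _ (fun u => by simpa using hb d1 H1 inferInstance hd1 u))
  have hiu0 : Integrable (fun u => u * d0 u) μ := by
    refine hμ.mono ((measurable_id.mul hmono0.measurable).aestronglyMeasurable) ?_
    refine ae_of_all _ (fun u => ?_)
    rw [norm_mul]
    simpa [id] using mul_le_of_le_one_right (norm_nonneg u) (hb d0 H0 inferInstance hd0 u)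
  have hiu1 : Integrable (fun u => u * d1 u) μ := by
    refine hμ.mono ((measurable_id.mul hmono1.measurable).aestronglyMeasurable) ?_
    refine ae_of_all _ (fun u => ?_)
    rw [norm_mul]
    simpa [id] using mul_le_of_le_one_right (norm_nonneg u) (hb d1 H1 inferInstance hd1 u)
  -- integrate key2 over μ.prod μ
  have hI1 : Integrable (fun p : ℝ × ℝ => p.1 * d1 p.1 * d0 p.2) (μ.prod μ) :=
    hiu1.mul_prod hi0
  have hI2 : Integrable (fun p : ℝ × ℝ => d0 p.1 * (p.2 * d1 p.2)) (μ.prod μ) :=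
    hi0.mul_prod hiu1
  have hI3 : Integrable (fun p : ℝ × ℝ => p.1 * d0 p.1 * d1 p.2) (μ.prod μ) :=
    hiu0.mul_prod hi1
  have hI4 : Integrable (fun p : ℝ × ℝ => d1 p.1 * (p.2 * d0 p.2)) (μ.prod μ) :=
    hi1.mul_prod hiu0
  have hmain : (∫ u, u * d1 u ∂μ) * (∫ u, d0 u ∂μ) ≤
      (∫ u, u * d0 u ∂μ) * (∫ u, d1 u ∂μ) := by
    have hle : ∫ p : ℝ × ℝ, (p.1 * d1 p.1 * d0 p.2 + d0 p.1 * (p.2 * d1 p.2)) ∂(μ.prod μ)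
        ≤ ∫ p : ℝ × ℝ, (p.1 * d0 p.1 * d1 p.2 + d1 p.1 * (p.2 * d0 p.2)) ∂(μ.prod μ) := by
      refine integral_mono (hI1.add hI2) (hI3.add hI4) (fun p => ?_)
      have := key2 p.1 p.2
      simp only
      linarith
    rw [integral_add hI1 hI2, integral_add hI3 hI4,
      integral_prod_mul (fun u => u * d1 u) d0, integral_prod_mul d0 (fun u => u * d1 u),
      integral_prod_mul (fun u => u * d0 u) d1, integral_prod_mul d1 (fun u => u * d0 u)]
      at hle
    linarith
  rw [div_le_div_iff₀ h1 h0]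
  linarith
end
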